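/- Let M be a matroid on a finite ground set E with no loops and no coloops. Then, as functions ℝ^E → ℤ, the indicator function of the base polytope P(M) equals the sum, over all chains C in the lattice of cyclic flats Z(M) that contain both the minimum 0_Z and the maximum 1_Z of Z(M), of λ_C times the indicator function of P(S_C), where λ_C = −μ(C, 1̂) is computed via the Möbius function μ of the cyclic chain lattice of M. -/

import Mathlib

open scoped Classical

namespace GPoly

/-- A step of a Delannoy path: east `+(1,0)`, north `+(0,1)` or diagonal `+(1,1)`. -/
inductive DStep : Type
  | east : DStep
  | north : DStep
  | diag : DStep
  deriving DecidableEq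

/-- Horizontal displacement of a step. -/
def DStep.dx : DStep → ℕ
  | .east => 1
  | .north => 0
  | .diag => 1

/-- Vertical displacement of a step. -/
def DStep.dy : DStep → ℕ
  | .east => 0
  | .north => 1
  | .diag => 1

/-- Position reached after the first `k` steps of `P`, starting at the point `s`. -/
def pathPos (s : ℕ × ℕ) (P : List DStep) (k : ℕ) : ℕ × ℕ :=
  (s.1 + ((P.take k).map DStep.dx).sum, s.2 + ((P.take k).map DStep.dy).sum)

/-- The Gale order: `U ≤ B` iff the increasing enumerations satisfy `u_ℓ ≤ b_ℓ`. -/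
def galeLe {α : Type*} [LinearOrder α] (U B : Finset α) : Prop :=
  List.Forall₂ (· ≤ ·) (U.sort (· ≤ ·)) (B.sort (· ≤ ·))

/-- Bases of the Schubert matroid `SM(U)` of rank `r` on `[n] = {1, …, n}`:
all `r`-subsets `B` of `[n]` with `U ≤ B` in the Gale order. -/
noncomputable def schubertBases (n r : ℕ) (U : Finset ℕ) : Finset (Finset ℕ) :=
  (Finset.Icc 1 n).powerset.filter fun B => B.card = r ∧ galeLe U B

/-- The point `p` lies weakly below the lattice path `path(U)`. -/
def belowPath (U : Finset ℕ) (p : ℕ × ℕ) : Prop :=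
  p.2 ≤ (U ∩ Finset.Icc 1 (p.1 + p.2)).card

/-- `path(U)` traverses the vertical unit segment from `(x, y)` to `(x, y+1)`
(by its north step number `x + y + 1`). -/
def uVertSeg (U : Finset ℕ) (x y : ℕ) : Prop :=
  x + y + 1 ∈ U ∧ (U ∩ Finset.Icc 1 (x + y + 1)).card = y + 1

/-- A Delannoy path associated to `SM(U)`: starts at `(1,1)`, ends at `(n-r, r)` and
stays weakly below `path(U)`. -/
def IsDelannoy (n r : ℕ) (U : Finset ℕ) (P : List DStep) : Prop :=
  pathPos (1, 1) P P.length = (n - r, r) ∧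
    ∀ k ≤ P.length, belowPath U (pathPos (1, 1) P k)

/-- Admissible Delannoy path associated to `SM(U)`. -/
def IsAdmissible (n r : ℕ) (U : Finset ℕ) (P : List DStep) : Prop :=
  IsDelannoy n r U P ∧
    ∀ (k : ℕ) (h : k < P.length),
      (P.get ⟨k, h⟩ = DStep.north →
        pathPos (1, 1) P (k + 1) = (n - r, r) ∨
          ¬ uVertSeg U (pathPos (1, 1) P k).1 (pathPos (1, 1) P k).2) ∧
      (P.get ⟨k, h⟩ = DStep.diag →
        belowPath U ((pathPos (1, 1) P k).1, (pathPos (1, 1) P k).2 + 1) ∧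
          ¬ uVertSeg U (pathPos (1, 1) P k).1 (pathPos (1, 1) P k).2)

/-- Number of diagonal steps of a path. -/
def diagCount (P : List DStep) : ℕ := (P.filter (· = DStep.diag)).length

/-- The set of indices (0-based) of the diagonal steps of `P`. -/
def diagIndices (P : List DStep) : Finset ℕ :=
  (Finset.range P.length).filter fun k => P.getD k DStep.east = DStep.diag

/-- Replace a diagonal step by a north step followed by an east step. -/
def expandNE : DStep → List DStep
  | DStep.diag => [DStep.north, DStep.east]
  | s => [s]

/-- Replace a diagonal step by an east step followed by a north step. -/
def expandEN : DStep → List DStep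
  | DStep.diag => [DStep.east, DStep.north]
  | s => [s]

/-- The full lattice path of `B_P`: an east step, a north step, then the steps of `P`
with each diagonal step replaced by a north step immediately followed by an east step. -/
def fullPath (P : List DStep) : List DStep :=
  DStep.east :: DStep.north :: (P.map expandNE).flatten

/-- The subset of `[n]` whose `path` is the given (diagonal-free) list of steps:
the set of (1-based) positions of the north steps. -/
def northSet (L : List DStep) : Finset ℕ :=
  ((Finset.range L.length).filter fun k => L.getD k DStep.east = DStep.north).image (· + 1)

/-- The basis `B_P` associated to a Delannoy path `P`. -/
def delannoyBasis (P : List DStep) : Finset ℕ := northSet (fullPath P)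

/-! ### Matroid notions for a family of bases -/

/-- `S` is independent for the basis family `ℬ`: it is contained in some basis. -/
def famIndep (ℬ : Finset (Finset ℕ)) (S : Finset ℕ) : Prop := ∃ B ∈ ℬ, S ⊆ B

/-- `C` is a circuit for the basis family `ℬ`: a minimal dependent set. -/
def famCircuit (ℬ : Finset (Finset ℕ)) (C : Finset ℕ) : Prop :=
  ¬ famIndep ℬ C ∧ ∀ C' ⊂ C, famIndep ℬ C'

/-- The dual basis family on the ground set `E`: complements of bases. -/
noncomputable def famDual (E : Finset ℕ) (ℬ : Finset (Finset ℕ)) : Finset (Finset ℕ) :=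
  ℬ.image fun B => E \ B

/-- `e ∉ B` is externally active: `e` is the smallest element of the unique circuit
contained in `B ∪ {e}`. -/
def ExtActive (E : Finset ℕ) (ℬ : Finset (Finset ℕ)) (B : Finset ℕ) (e : ℕ) : Prop :=
  e ∈ E ∧ e ∉ B ∧
    ∃ C, C ⊆ insert e B ∧ famCircuit ℬ C ∧ e ∈ C ∧ ∀ x ∈ C, e ≤ x

/-- `i ∈ B` is internally active: `i` is the smallest element of the unique cocircuit
contained in `(E ∖ B) ∪ {i}`. -/
def IntActive (E : Finset ℕ) (ℬ : Finset (Finset ℕ)) (B : Finset ℕ) (i : ℕ) : Prop :=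
  i ∈ B ∧
    ∃ C, C ⊆ insert i (E \ B) ∧ famCircuit (famDual E ℬ) C ∧ i ∈ C ∧ ∀ x ∈ C, i ≤ x

/-- External activity `e(B)`. -/
noncomputable def extAct (E : Finset ℕ) (ℬ : Finset (Finset ℕ)) (B : Finset ℕ) : ℕ :=
  (E.filter (ExtActive E ℬ B)).card

/-- Internal activity `i(B)`. -/
noncomputable def intAct (E : Finset ℕ) (ℬ : Finset (Finset ℕ)) (B : Finset ℕ) : ℕ :=
  (E.filter (IntActive E ℬ B)).card

/-- The statistic `α(B)`: the number of `i ∈ B` such that `B' = (B ∖ {i}) ∪ {i+1}`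
is a basis with `e(B') = e(B)` and `i(B') = i(B)`. -/
noncomputable def alphaStat (E : Finset ℕ) (ℬ : Finset (Finset ℕ)) (B : Finset ℕ) : ℕ :=
  (B.filter fun i =>
    insert (i + 1) (B.erase i) ∈ ℬ ∧
      extAct E ℬ (insert (i + 1) (B.erase i)) = extAct E ℬ B ∧
      intAct E ℬ (insert (i + 1) (B.erase i)) = intAct E ℬ B).card

/-- The rank function determined by a family of bases. -/
noncomputable def famRank (ℬ : Finset (Finset ℕ)) (A : Finset ℕ) : ℕ :=
  ℬ.sup fun B => (A ∩ B).card

/-- The β-invariant: `β(M) = (−1)^{rk(E)} Σ_{A ⊆ E} (−1)^{|A|} rk(A)`. -/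
noncomputable def betaInv (E : Finset ℕ) (ℬ : Finset (Finset ℕ)) : ℤ :=
  (-1) ^ famRank ℬ E * ∑ A ∈ E.powerset, (-1) ^ A.card * (famRank ℬ A : ℤ)

/-- `ℬ` is the collection of bases of a matroid with ground set `E`:
it is a nonempty family of subsets of `E` satisfying the basis exchange property. -/
def IsBasisFamily (E : Finset ℕ) (ℬ : Finset (Finset ℕ)) : Prop :=
  ℬ.Nonempty ∧ (∀ B ∈ ℬ, B ⊆ E) ∧
    ∀ B₁ ∈ ℬ, ∀ B₂ ∈ ℬ, ∀ x ∈ B₁ \ B₂, ∃ y ∈ B₂ \ B₁, insert y (B₁.erase x) ∈ ℬ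

/-- Two elements lie in a common component: they are equal or in a common circuit. -/
def connRel (ℬ : Finset (Finset ℕ)) (e f : ℕ) : Prop :=
  e = f ∨ ∃ C, famCircuit ℬ C ∧ e ∈ C ∧ f ∈ C

/-- The number of connected components of the matroid with bases `ℬ` on `E`. -/
noncomputable def numComponents (E : Finset ℕ) (ℬ : Finset (Finset ℕ)) : ℕ :=
  Set.ncard {S : Set ℕ | ∃ e ∈ E, S = {f | f ∈ E ∧ Relation.EqvGen (connRel ℬ) e f}}

/-- The matroid with bases `ℬ` on ground set `E` is connected. -/
def IsConnectedFam (E : Finset ℕ) (ℬ : Finset (Finset ℕ)) : Prop :=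
  E.Nonempty ∧ ∀ e ∈ E, ∀ f ∈ E, Relation.EqvGen (connRel ℬ) e f

/-- Series-parallel matroid: isomorphic to `U_{0,1}` or `U_{1,1}`
(a single loop or a single coloop), or connected with β-invariant `1`. -/
def IsSeriesParallel (E : Finset ℕ) (ℬ : Finset (Finset ℕ)) : Prop :=
  (E.card = 1 ∧ (ℬ = {∅} ∨ ℬ = {E})) ∨ (IsConnectedFam E ℬ ∧ betaInv E ℬ = 1)

/-- The bases of the restriction of the matroid with bases `ℬ` to the set `F`:
the maximal intersections of bases with `F`. -/
noncomputable def famRestrict (ℬ : Finset (Finset ℕ)) (F : Finset ℕ) : Finset (Finset ℕ) :=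
  (ℬ.image (· ∩ F)).filter fun S => ∀ T ∈ ℬ.image (· ∩ F), S ⊆ T → S = T

/-- The matroid with bases `ℬ` on `E` is a direct sum of series-parallel matroids. -/
def IsDirectSumOfSeriesParallel (E : Finset ℕ) (ℬ : Finset (Finset ℕ)) : Prop :=
  ∃ parts : Finset (Finset ℕ),
    (↑parts : Set (Finset ℕ)).PairwiseDisjoint id ∧
    parts.sup id = E ∧
    (∀ S ∈ parts, IsSeriesParallel S (famRestrict ℬ S)) ∧
    ℬ = E.powerset.filter fun B => ∀ S ∈ parts, B ∩ S ∈ famRestrict ℬ S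

/-! ### Base polytopes -/

/-- The indicator vector of `B ⊆ E`, as a point of `ℝ^E`. -/
noncomputable def basisVector (E : Finset ℕ) (B : Finset ℕ) : ↑E → ℝ :=
  fun e => if (e : ℕ) ∈ B then 1 else 0

/-- The base polytope of the matroid with bases `ℬ` on `E`:
the convex hull in `ℝ^E` of the indicator vectors of the bases. -/
noncomputable def basePolytope (E : Finset ℕ) (ℬ : Finset (Finset ℕ)) : Set (↑E → ℝ) :=
  convexHull ℝ (basisVector E '' (↑ℬ : Set (Finset ℕ)))

/-- The indicator function `ℝ^E → ℤ` of the base polytope. -/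
noncomputable def polyInd (E : Finset ℕ) (ℬ : Finset (Finset ℕ)) : (↑E → ℝ) → ℤ :=
  fun x => if x ∈ basePolytope E ℬ then 1 else 0

/-- The indicator function `ℝ^E → ℤ` of the relative interior of the base polytope. -/
noncomputable def relintInd (E : Finset ℕ) (ℬ : Finset (Finset ℕ)) : (↑E → ℝ) → ℤ :=
  fun x => if x ∈ intrinsicInterior ℝ (basePolytope E ℬ) then 1 else 0

/-! ### Cyclic flats and the cyclic chain lattice -/

/-- `F` is a flat of the matroid with bases `ℬ` on `E`. -/
def IsFlat (E : Finset ℕ) (ℬ : Finset (Finset ℕ)) (F : Finset ℕ) : Prop :=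
  F ⊆ E ∧ ∀ e ∈ E, famRank ℬ (insert e F) = famRank ℬ F → e ∈ F

/-- `F` is a cyclic flat: a flat whose restriction has no coloops. -/
def IsCyclicFlat (E : Finset ℕ) (ℬ : Finset (Finset ℕ)) (F : Finset ℕ) : Prop :=
  IsFlat E ℬ F ∧ ∀ e ∈ F, ¬ (∀ S ∈ famRestrict ℬ F, e ∈ S)

/-- The set of cyclic flats. -/
noncomputable def cyclicFlats (E : Finset ℕ) (ℬ : Finset (Finset ℕ)) : Finset (Finset ℕ) :=
  E.powerset.filter (IsCyclicFlat E ℬ)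

/-- A chain of cyclic flats containing the minimum and maximum of the lattice of
cyclic flats; these are the elements (other than the top `1̂`) of the cyclic
chain lattice. -/
def IsCyclicChain (E : Finset ℕ) (ℬ : Finset (Finset ℕ)) (C : Finset (Finset ℕ)) : Prop :=
  ↑C ⊆ (cyclicFlats E ℬ : Set (Finset ℕ)) ∧ IsChain (· ⊆ ·) (↑C : Set (Finset ℕ)) ∧
    (∃ F ∈ C, ∀ G ∈ cyclicFlats E ℬ, F ⊆ G) ∧
    (∃ F ∈ C, ∀ G ∈ cyclicFlats E ℬ, G ⊆ F)

/-- The set of chains of cyclic flats containing the minimum and the maximum. -/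
noncomputable def cyclicChains (E : Finset ℕ) (ℬ : Finset (Finset ℕ)) :
    Finset (Finset (Finset ℕ)) :=
  (cyclicFlats E ℬ).powerset.filter (IsCyclicChain E ℬ)

/-- The rank function `A ↦ min_{Z ∈ C} (rk_M(Z) + |A ∖ Z|)` associated to a chain `C`. -/
noncomputable def chainRank (ℬ : Finset (Finset ℕ)) (C : Finset (Finset ℕ))
    (A : Finset ℕ) : ℕ :=
  if h : C.Nonempty then C.inf' h fun Z => famRank ℬ Z + (A \ Z).card else A.card

/-- The bases of the matroid on `E` with rank function `rk`:
the subsets `B ⊆ E` with `rk B = |B| = rk E`. -/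
noncomputable def basesOfRank (E : Finset ℕ) (rk : Finset ℕ → ℕ) : Finset (Finset ℕ) :=
  E.powerset.filter fun B => rk B = B.card ∧ rk B = rk E

/-- The bases of the Schubert matroid `S_C` associated to a chain `C` of cyclic flats. -/
noncomputable def chainSchubert (E : Finset ℕ) (ℬ : Finset (Finset ℕ))
    (C : Finset (Finset ℕ)) : Finset (Finset ℕ) :=
  basesOfRank E (chainRank ℬ C)

/-- The point reached by `path(S)` after `k` steps. -/
def pathPoint (S : Finset ℕ) (k : ℕ) : ℕ × ℕ :=
  (k - (S ∩ Finset.Icc 1 k).card, (S ∩ Finset.Icc 1 k).card)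


section Dev
open Finset

variable {E : Finset ℕ} {ℬ : Finset (Finset ℕ)}

/-- Independent sets of the family. -/
def Ind (ℬ : Finset (Finset ℕ)) (S : Finset ℕ) : Prop := ∃ B ∈ ℬ, S ⊆ B

lemma basis_card_eq (hM : IsBasisFamily E ℬ) :
    ∀ n B₁ B₂, B₁ ∈ ℬ → B₂ ∈ ℬ → (B₁ \ B₂).card = n → B₁.card = B₂.card := by
  intro n
  induction n with
  | zero =>
    intro B₁ B₂ h1 h2 h0
    have hsub : B₁ ⊆ B₂ := by
      rwa [Finset.card_eq_zero, Finset.sdiff_eq_empty_iff_subset] at h0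
    have hsub2 : B₂ ⊆ B₁ := by
      by_contra hne
      obtain ⟨x, hx⟩ : (B₂ \ B₁).Nonempty := by
        rw [Finset.sdiff_nonempty]; exact hne
      obtain ⟨y, hy, -⟩ := hM.2.2 B₂ h2 B₁ h1 x hx
      rw [Finset.sdiff_eq_empty_iff_subset.2 hsub] at hy
      exact absurd hy (Finset.notMem_empty y)
    exact le_antisymm (Finset.card_le_card hsub) (Finset.card_le_card hsub2)
  | succ n ih =>
    intro B₁ B₂ h1 h2 h0
    obtain ⟨x, hx⟩ : (B₁ \ B₂).Nonempty := by
      rw [← Finset.card_pos, h0]; omega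
    obtain ⟨y, hy, hB'⟩ := hM.2.2 B₁ h1 B₂ h2 x hx
    rw [Finset.mem_sdiff] at hx hy
    have hcard : (insert y (B₁.erase x)).card = B₁.card := by
      rw [Finset.card_insert_of_notMem (fun h => hy.2 (Finset.mem_of_mem_erase h)),
        Finset.card_erase_of_mem hx.1]
      have : 0 < B₁.card := Finset.card_pos.2 ⟨x, hx.1⟩
      omega
    have hd : (insert y (B₁.erase x) \ B₂).card = n := by
      rw [Finset.insert_sdiff_of_mem _ hy.1, Finset.erase_sdiff_comm,
        Finset.card_erase_of_mem (Finset.mem_sdiff.2 hx), h0]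
      omega
    rw [← hcard]
    exact ih _ B₂ hB' h2 hd

lemma famRank_eq_basis_card (hM : IsBasisFamily E ℬ) {B : Finset ℕ} (hB : B ∈ ℬ) :
    famRank ℬ E = B.card := by
  unfold famRank
  apply le_antisymm
  · exact Finset.sup_le fun B' hB' => le_trans (Finset.card_le_card (Finset.inter_subset_right))
      (le_of_eq (basis_card_eq hM _ B' B hB' hB rfl))
  · calc B.card = (E ∩ B).card := by
          rw [Finset.inter_eq_right.2 (hM.2.1 B hB)]
       _ ≤ _ := Finset.le_sup (f := fun B => (E ∩ B).card) hB

lemma card_inter_le_famRank {B A : Finset ℕ} (hB : B ∈ ℬ) : (A ∩ B).card ≤ famRank ℬ A :=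
  Finset.le_sup (f := fun B => (A ∩ B).card) hB

lemma famRank_mono {A A' : Finset ℕ} (h : A ⊆ A') : famRank ℬ A ≤ famRank ℬ A' :=
  Finset.sup_le fun B hB => le_trans
    (Finset.card_le_card (Finset.inter_subset_inter h (le_refl B))) (card_inter_le_famRank hB)

lemma famRank_le_card (A : Finset ℕ) : famRank ℬ A ≤ A.card :=
  Finset.sup_le fun _ _ => Finset.card_le_card Finset.inter_subset_left

lemma famRank_empty : famRank ℬ ∅ = 0 :=
  Nat.le_zero.1 (le_trans (famRank_le_card ∅) (le_of_eq Finset.card_empty))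

lemma ind_card_le_famRank {S A : Finset ℕ} (hS : Ind ℬ S) (hSA : S ⊆ A) :
    S.card ≤ famRank ℬ A := by
  obtain ⟨B, hB, hSB⟩ := hS
  exact le_trans (Finset.card_le_card (Finset.subset_inter hSA hSB)) (card_inter_le_famRank hB)

lemma exists_famRank_inter (hne : ℬ.Nonempty) (A : Finset ℕ) :
    ∃ B ∈ ℬ, (A ∩ B).card = famRank ℬ A := by
  obtain ⟨B, hB, h⟩ := Finset.exists_mem_eq_sup ℬ hne (fun B => (A ∩ B).card)
  exact ⟨B, hB, h.symm⟩

lemma indep_aug (hM : IsBasisFamily E ℬ) {I J : Finset ℕ} (hI : Ind ℬ I) (hJ : Ind ℬ J)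
    (hlt : I.card < J.card) : ∃ e ∈ J, e ∉ I ∧ Ind ℬ (insert e I) := by
  obtain ⟨B₂, hB₂, hJB₂⟩ := hJ
  obtain ⟨B, hB, hIB⟩ := hI
  have key : ∀ n B', B' ∈ ℬ → I ⊆ B' → (B₂ \ B').card ≤ n →
      ∃ e ∈ J, e ∉ I ∧ Ind ℬ (insert e I) := by
    intro n
    induction n with
    | zero =>
      intro B' hB' hIB' hc
      -- B₂ ⊆ B', so J ⊆ B', find e ∈ J \ I
      have hsub : B₂ ⊆ B' := Finset.sdiff_eq_empty_iff_subset.1 (Finset.card_eq_zero.1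
        (Nat.le_zero.1 hc))
      obtain ⟨e, he⟩ : (J \ I).Nonempty := by
        rw [← Finset.card_pos]
        have := Finset.card_le_card (Finset.sdiff_subset_sdiff (le_refl J) (Finset.empty_subset I))
        have h2 : I.card < J.card := hlt
        have := Finset.le_card_sdiff I J
        omega
      rw [Finset.mem_sdiff] at he
      exact ⟨e, he.1, he.2, B', hB', Finset.insert_subset (hsub (hJB₂ he.1)) hIB'⟩
    | succ n ih =>
      intro B' hB' hIB' hc
      by_cases h : ∃ e ∈ B' ∩ J, e ∉ I
      · obtain ⟨e, he, heI⟩ := h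
        rw [Finset.mem_inter] at he
        exact ⟨e, he.2, heI, B', hB', Finset.insert_subset he.1 hIB'⟩
      · push_neg at h
        have hBJ : B' ∩ J ⊆ I := h
        by_cases h2 : ∃ x ∈ B', x ∉ B₂ ∧ x ∉ I
        · obtain ⟨x, hx, hxB₂, hxI⟩ := h2
          obtain ⟨y, hy, hB''⟩ := hM.2.2 B' hB' B₂ hB₂ x (Finset.mem_sdiff.2 ⟨hx, hxB₂⟩)
          rw [Finset.mem_sdiff] at hy
          have hIB'' : I ⊆ insert y (B'.erase x) := fun a ha =>
            Finset.mem_insert.2 (Or.inr (Finset.mem_erase.2 ⟨fun hax => hxI (hax ▸ ha), hIB' ha⟩))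
          apply ih _ hB'' hIB''
          have : B₂ \ insert y (B'.erase x) ⊆ (B₂ \ B').erase y := by
            intro a ha
            rw [Finset.mem_sdiff, Finset.mem_insert, Finset.mem_erase] at ha
            push_neg at ha
            rw [Finset.mem_erase, Finset.mem_sdiff]
            refine ⟨ha.2.1, ha.1, fun haB' => ?_⟩
            rcases eq_or_ne a x with rfl | hax
            · exact hxB₂ ha.1
            · exact ha.2.2 hax haB'
          have h3 := Finset.card_le_card this
          have h4 : ((B₂ \ B').erase y).card = (B₂ \ B').card - 1 :=
            Finset.card_erase_of_mem (Finset.mem_sdiff.2 hy)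
          have h5 : 0 < (B₂ \ B').card := Finset.card_pos.2 ⟨y, Finset.mem_sdiff.2 hy⟩
          omega
        · push_neg at h2
          exfalso
          have hsub : B' \ I ⊆ B₂ \ J := by
            intro a ha
            rw [Finset.mem_sdiff] at ha ⊢
            refine ⟨?_, fun haJ => ha.2 (hBJ (Finset.mem_inter.2 ⟨ha.1, haJ⟩))⟩
            by_contra haB₂
            exact ha.2 (h2 a ha.1 haB₂)
          have h3 := Finset.card_le_card hsub
          rw [Finset.card_sdiff_of_subset hIB', Finset.card_sdiff_of_subset hJB₂] at h3
          have h4 := basis_card_eq hM _ B' B₂ hB' hB₂ rfl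
          have h5 := Finset.card_le_card hIB'
          have h6 := Finset.card_le_card hJB₂
          omega
  exact key _ B hB hIB (le_refl _)
end Dev
section Dev2
open Finset
variable {E : Finset ℕ} {ℬ : Finset (Finset ℕ)}

lemma exists_extend (hM : IsBasisFamily E ℬ) {I F : Finset ℕ} (hI : Ind ℬ I) (hIF : I ⊆ F) :
    ∃ B ∈ ℬ, I ⊆ B ∩ F ∧ (B ∩ F).card = famRank ℬ F := by
  have key : ∀ n I, Ind ℬ I → I ⊆ F → famRank ℬ F - I.card ≤ n →
      ∃ B ∈ ℬ, I ⊆ B ∩ F ∧ (B ∩ F).card = famRank ℬ F := by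
    intro n
    induction n with
    | zero =>
      intro I hI hIF hc
      have hle : I.card ≤ famRank ℬ F := ind_card_le_famRank hI hIF
      have heq : I.card = famRank ℬ F := by omega
      obtain ⟨B, hB, hIB⟩ := hI
      have hsub : I ⊆ B ∩ F := Finset.subset_inter hIB hIF
      have hle2 : (B ∩ F).card ≤ famRank ℬ F := by
        rw [Finset.inter_comm]; exact card_inter_le_famRank hB
      have := Finset.card_le_card hsub
      exact ⟨B, hB, hsub, by omega⟩
    | succ n ih =>
      intro I hI hIF hc
      by_cases heq : famRank ℬ F ≤ I.card
      · exact ih I hI hIF (by omega)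
      · obtain ⟨B₀, hB₀, hJ⟩ := exists_famRank_inter hM.1 F
        have hJind : Ind ℬ (F ∩ B₀) := ⟨B₀, hB₀, Finset.inter_subset_right⟩
        obtain ⟨e, heJ, heI, hins⟩ := indep_aug hM hI hJind (by omega)
        obtain ⟨B, hB, hsub, hcard⟩ := ih (insert e I) hins
          (Finset.insert_subset (Finset.mem_of_mem_inter_left heJ) hIF)
          (by rw [Finset.card_insert_of_notMem heI]; omega)
        exact ⟨B, hB, (Finset.subset_insert e I).trans hsub, hcard⟩
  exact key _ I hI hIF (le_refl _)

lemma famRank_submod (hM : IsBasisFamily E ℬ) (A B : Finset ℕ) :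
    famRank ℬ (A ∪ B) + famRank ℬ (A ∩ B) ≤ famRank ℬ A + famRank ℬ B := by
  obtain ⟨B₀, hB₀, hI⟩ := exists_famRank_inter hM.1 (A ∩ B)
  set I := (A ∩ B) ∩ B₀ with hIdef
  have hIind : Ind ℬ I := ⟨B₀, hB₀, Finset.inter_subset_right⟩
  obtain ⟨B₁, hB₁, hIK, hK⟩ := exists_extend hM (F := A ∪ B) hIind
    (Finset.inter_subset_left.trans (Finset.inter_subset_left.trans Finset.subset_union_left))
  set K := B₁ ∩ (A ∪ B) with hKdef
  have h1 : (K ∩ A).card ≤ famRank ℬ A := by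
    have : K ∩ A ⊆ A ∩ B₁ := by
      intro a ha; rw [Finset.mem_inter] at ha ⊢
      exact ⟨ha.2, Finset.mem_of_mem_inter_left ha.1⟩
    exact le_trans (Finset.card_le_card this) (card_inter_le_famRank hB₁)
  have h2 : (K ∩ B).card ≤ famRank ℬ B := by
    have : K ∩ B ⊆ B ∩ B₁ := by
      intro a ha; rw [Finset.mem_inter] at ha ⊢
      exact ⟨ha.2, Finset.mem_of_mem_inter_left ha.1⟩
    exact le_trans (Finset.card_le_card this) (card_inter_le_famRank hB₁)
  have hmod : (K ∩ A).card + (K ∩ B).card = K.card + (K ∩ A ∩ B).card := by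
    have hu : (K ∩ A) ∪ (K ∩ B) = K := by
      rw [← Finset.inter_union_distrib_left]
      exact Finset.inter_eq_left.2 Finset.inter_subset_right
    have hi : (K ∩ A) ∩ (K ∩ B) = K ∩ A ∩ B := by
      ext a; simp only [Finset.mem_inter]; tauto
    rw [← Finset.card_union_add_card_inter, hu, hi]
  have h3 : famRank ℬ (A ∩ B) ≤ (K ∩ A ∩ B).card := by
    rw [← hI]
    apply Finset.card_le_card
    intro a ha
    have h5 : a ∈ K := hIK ha
    have h6 := Finset.mem_inter.1 (Finset.mem_of_mem_inter_left ha)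
    exact Finset.mem_inter.2 ⟨Finset.mem_inter.2 ⟨h5, h6.1⟩, h6.2⟩
  have h4 : famRank ℬ (A ∪ B) = K.card := hK.symm
  omega

lemma famRank_insert_le (A : Finset ℕ) (e : ℕ) :
    famRank ℬ (insert e A) ≤ famRank ℬ A + 1 := by
  apply Finset.sup_le
  intro B hB
  calc (insert e A ∩ B).card ≤ (insert e (A ∩ B)).card :=
        Finset.card_le_card (by intro a ha; rw [Finset.mem_inter, Finset.mem_insert] at ha
                                rcases ha.1 with rfl | h
                                · exact Finset.mem_insert_self _ _
                                · exact Finset.mem_insert_of_mem (Finset.mem_inter.2 ⟨h, ha.2⟩))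
    _ ≤ (A ∩ B).card + 1 := Finset.card_insert_le _ _
    _ ≤ famRank ℬ A + 1 := by have := card_inter_le_famRank (A := A) hB; omega

lemma famRank_union_le_card (A S : Finset ℕ) :
    famRank ℬ (A ∪ S) ≤ famRank ℬ A + S.card := by
  induction S using Finset.induction with
  | empty => rw [Finset.union_empty]; simp
  | @insert e S he ih =>
    have hstep2 : A ∪ insert e S = insert e (A ∪ S) := by
      ext a; simp only [Finset.mem_union, Finset.mem_insert]; tauto
    rw [hstep2, Finset.card_insert_of_notMem he]
    have := famRank_insert_le (ℬ := ℬ) (A ∪ S) e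
    omega

/-- closure operator -/
noncomputable def clos (E : Finset ℕ) (ℬ : Finset (Finset ℕ)) (A : Finset ℕ) : Finset ℕ :=
  A ∪ E.filter (fun e => famRank ℬ (insert e A) = famRank ℬ A)

lemma subset_clos (A : Finset ℕ) : A ⊆ clos E ℬ A := Finset.subset_union_left

lemma clos_subset (hA : A ⊆ E) : clos E ℬ A ⊆ E :=
  Finset.union_subset hA (Finset.filter_subset _ _)

lemma famRank_union_eq (hM : IsBasisFamily E ℬ) {A S : Finset ℕ}
    (hS : ∀ e ∈ S, famRank ℬ (insert e A) = famRank ℬ A) :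
    famRank ℬ (A ∪ S) = famRank ℬ A := by
  induction S using Finset.induction with
  | empty => rw [Finset.union_empty]
  | @insert e S he ih =>
    have hS' : ∀ e ∈ S, famRank ℬ (insert e A) = famRank ℬ A :=
      fun f hf => hS f (Finset.mem_insert_of_mem hf)
    have heA : famRank ℬ (insert e A) = famRank ℬ A := hS e (Finset.mem_insert_self _ _)
    have hstep : A ∪ insert e S = insert e (A ∪ S) := by
      ext a; simp only [Finset.mem_union, Finset.mem_insert]; tauto
    rw [hstep]
    apply le_antisymm
    · have hsub := famRank_submod hM (insert e A) (A ∪ S)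
      have h1 : insert e A ∪ (A ∪ S) = insert e (A ∪ S) := by
        ext a; simp only [Finset.mem_union, Finset.mem_insert]; tauto
      have h2 : famRank ℬ A ≤ famRank ℬ (insert e A ∩ (A ∪ S)) :=
        famRank_mono (Finset.subset_inter (by intro a ha; exact Finset.mem_insert_of_mem ha)
          Finset.subset_union_left)
      rw [h1] at hsub
      have := ih hS'
      omega
    · calc famRank ℬ A = famRank ℬ (A ∪ S) := (ih hS').symm
        _ ≤ _ := famRank_mono (Finset.subset_insert _ _)

lemma famRank_clos (hM : IsBasisFamily E ℬ) (A : Finset ℕ) :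
    famRank ℬ (clos E ℬ A) = famRank ℬ A :=
  famRank_union_eq hM (fun e he => (Finset.mem_filter.1 he).2)

lemma clos_isFlat (hM : IsBasisFamily E ℬ) {A : Finset ℕ} (hA : A ⊆ E) :
    IsFlat E ℬ (clos E ℬ A) := by
  refine ⟨clos_subset hA, fun e he hrk => ?_⟩
  have h1 : famRank ℬ (insert e A) ≤ famRank ℬ A := by
    calc famRank ℬ (insert e A) ≤ famRank ℬ (insert e (clos E ℬ A)) :=
          famRank_mono (Finset.insert_subset_insert _ (subset_clos A))
      _ = famRank ℬ (clos E ℬ A) := hrk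
      _ = famRank ℬ A := famRank_clos hM A
  have h2 : famRank ℬ A ≤ famRank ℬ (insert e A) := famRank_mono (Finset.subset_insert _ _)
  exact Finset.mem_union_right _ (Finset.mem_filter.2 ⟨he, le_antisymm h1 h2⟩)

lemma clos_min (hM : IsBasisFamily E ℬ) {A u : Finset ℕ} (hu : IsFlat E ℬ u) (hAu : A ⊆ u) :
    clos E ℬ A ⊆ u := by
  intro e he
  rcases Finset.mem_union.1 he with h | h
  · exact hAu h
  · rw [Finset.mem_filter] at h
    apply hu.2 e h.1
    apply le_antisymm
    · have hsub := famRank_submod hM (insert e A) u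
      have h1 : insert e A ∪ u = insert e u := by
        ext a; simp only [Finset.mem_union, Finset.mem_insert]
        constructor
        · rintro ((rfl | h) | h)
          exacts [Or.inl rfl, Or.inr (hAu h), Or.inr h]
        · rintro (rfl | h)
          exacts [Or.inl (Or.inl rfl), Or.inr h]
      have h2 : famRank ℬ A ≤ famRank ℬ (insert e A ∩ u) :=
        famRank_mono (Finset.subset_inter (Finset.subset_insert _ _) hAu)
      rw [h1] at hsub
      rw [h.2] at hsub
      omega
    · exact famRank_mono (Finset.subset_insert _ _)

lemma flat_clos_eq (hM : IsBasisFamily E ℬ) {F : Finset ℕ} (hF : IsFlat E ℬ F) :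
    clos E ℬ F = F :=
  le_antisymm (clos_min hM hF (le_refl F)) (subset_clos F)

/-- no coloops in the restriction -/
def IsCyc (ℬ : Finset (Finset ℕ)) (S : Finset ℕ) : Prop :=
  ∀ e ∈ S, famRank ℬ (S.erase e) = famRank ℬ S

lemma famRank_erase_ge (S : Finset ℕ) (e : ℕ) (he : e ∈ S) :
    famRank ℬ S ≤ famRank ℬ (S.erase e) + 1 := by
  have h1 : S ⊆ insert e (S.erase e) := by
    intro a ha; rcases eq_or_ne a e with rfl | hne
    · exact Finset.mem_insert_self _ _
    · exact Finset.mem_insert_of_mem (Finset.mem_erase.2 ⟨hne, ha⟩)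
  calc famRank ℬ S ≤ famRank ℬ (insert e (S.erase e)) := famRank_mono h1
    _ ≤ famRank ℬ (S.erase e) + 1 := famRank_insert_le _ _

lemma cyc_union (hM : IsBasisFamily E ℬ) {a b : Finset ℕ} (ha : IsCyc ℬ a) (hb : IsCyc ℬ b) :
    IsCyc ℬ (a ∪ b) := by
  have key : ∀ a b : Finset ℕ, IsCyc ℬ a → ∀ e ∈ a, famRank ℬ ((a ∪ b).erase e) = famRank ℬ (a ∪ b) := by
    intro a b ha e he
    apply le_antisymm (famRank_mono (Finset.erase_subset _ _))
    have hinter : a ∩ ((a ∪ b).erase e) = a.erase e := by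
      ext x; simp only [Finset.mem_inter, Finset.mem_erase, Finset.mem_union]; tauto
    have huni : a ∪ ((a ∪ b).erase e) = a ∪ b := by
      ext x; simp only [Finset.mem_union, Finset.mem_erase]
      constructor
      · rintro (h | ⟨-, h⟩); exacts [Or.inl h, h]
      · rintro (h | h)
        · exact Or.inl h
        · rcases eq_or_ne x e with rfl | hne
          · exact Or.inl he
          · exact Or.inr ⟨hne, Or.inr h⟩
    have hsub := famRank_submod hM a ((a ∪ b).erase e)
    rw [hinter, huni, ha e he] at hsub
    omega
  intro e he
  rcases Finset.mem_union.1 he with h | h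
  · exact key a b ha e h
  · rw [Finset.union_comm]
    exact key b a hb e h

lemma cyc_clos (hM : IsBasisFamily E ℬ) {S : Finset ℕ} (hS : IsCyc ℬ S) :
    IsCyc ℬ (clos E ℬ S) := by
  intro e he
  apply le_antisymm (famRank_mono (Finset.erase_subset _ _))
  by_cases heS : e ∈ S
  · calc famRank ℬ (clos E ℬ S) = famRank ℬ S := famRank_clos hM S
      _ = famRank ℬ (S.erase e) := (hS e heS).symm
      _ ≤ famRank ℬ ((clos E ℬ S).erase e) :=
          famRank_mono (fun a hha => Finset.mem_erase.2
            ⟨(Finset.mem_erase.1 hha).1, subset_clos S (Finset.mem_erase.1 hha).2⟩)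
  · calc famRank ℬ (clos E ℬ S) = famRank ℬ S := famRank_clos hM S
      _ ≤ famRank ℬ ((clos E ℬ S).erase e) :=
          famRank_mono (fun a hha => Finset.mem_erase.2
            ⟨fun h => heS (h ▸ hha), subset_clos S hha⟩)
end Dev2
section Dev3
open Finset
variable {E : Finset ℕ} {ℬ : Finset (Finset ℕ)}

lemma mem_famRestrict_iff (hM : IsBasisFamily E ℬ) {F S : Finset ℕ} :
    S ∈ famRestrict ℬ F ↔ ∃ B ∈ ℬ, S = B ∩ F ∧ (B ∩ F).card = famRank ℬ F := by
  unfold famRestrict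
  rw [Finset.mem_filter, Finset.mem_image]
  constructor
  · rintro ⟨⟨B, hB, rfl⟩, hmax⟩
    have hind : Ind ℬ (B ∩ F) := ⟨B, hB, Finset.inter_subset_left⟩
    obtain ⟨B', hB', hsub, hcard⟩ := exists_extend hM hind Finset.inter_subset_right
    have : B ∩ F = B' ∩ F := hmax _ (Finset.mem_image.2 ⟨B', hB', rfl⟩) hsub
    exact ⟨B', hB', this, hcard⟩
  · rintro ⟨B, hB, rfl, hcard⟩
    refine ⟨⟨B, hB, rfl⟩, ?_⟩
    rintro T hT hsub
    obtain ⟨B', hB', rfl⟩ := Finset.mem_image.1 hT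
    have hle : (B' ∩ F).card ≤ famRank ℬ F := by
      rw [Finset.inter_comm]; exact card_inter_le_famRank hB'
    exact Finset.eq_of_subset_of_card_le hsub (by omega)

lemma coloop_iff (hM : IsBasisFamily E ℬ) {F : Finset ℕ} {e : ℕ} :
    (∃ S ∈ famRestrict ℬ F, e ∉ S) ↔ famRank ℬ (F.erase e) = famRank ℬ F := by
  constructor
  · rintro ⟨S, hS, heS⟩
    obtain ⟨B, hB, rfl, hcard⟩ := (mem_famRestrict_iff hM).1 hS
    apply le_antisymm (famRank_mono (Finset.erase_subset _ _))
    have hsub : B ∩ F ⊆ F.erase e := fun a ha =>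
      Finset.mem_erase.2 ⟨fun h => heS (h ▸ ha), Finset.mem_of_mem_inter_right ha⟩
    calc famRank ℬ F = (B ∩ F).card := hcard.symm
      _ = (F.erase e ∩ B).card := by
          congr 1
          ext a
          simp only [Finset.mem_inter, Finset.mem_erase]
          constructor
          · intro h
            have h2 := Finset.mem_erase.1 (hsub (Finset.mem_inter.2 h))
            exact ⟨h2, h.1⟩
          · rintro ⟨⟨-, haF⟩, haB⟩
            exact ⟨haB, haF⟩
      _ ≤ famRank ℬ (F.erase e) := card_inter_le_famRank hB
  · intro heq
    obtain ⟨B, hB, hsub, hcard⟩ := exists_extend hM (I := ∅) (F := F.erase e)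
      ⟨hM.1.choose, hM.1.choose_spec, Finset.empty_subset _⟩ (Finset.empty_subset _)
    have h1 : B ∩ (F.erase e) ⊆ B ∩ F :=
      Finset.inter_subset_inter (le_refl B) (Finset.erase_subset _ _)
    have h2 : (B ∩ F).card ≤ famRank ℬ F := by
      rw [Finset.inter_comm]; exact card_inter_le_famRank hB
    have h3 : B ∩ F = B ∩ (F.erase e) :=
      (Finset.eq_of_subset_of_card_le h1 (by rw [hcard, heq]; exact h2)).symm
    refine ⟨B ∩ F, (mem_famRestrict_iff hM).2 ⟨B, hB, rfl, by rw [h3, hcard, heq]⟩, ?_⟩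
    rw [h3]
    intro hmem
    exact (Finset.mem_erase.1 (Finset.mem_of_mem_inter_right hmem)).1 rfl

lemma mem_cyclicFlats_iff (hM : IsBasisFamily E ℬ) {F : Finset ℕ} :
    F ∈ cyclicFlats E ℬ ↔ F ⊆ E ∧ IsFlat E ℬ F ∧ IsCyc ℬ F := by
  simp only [cyclicFlats, IsCyclicFlat, Finset.mem_filter, Finset.mem_powerset]
  constructor
  · rintro ⟨hFE, hflat, hcyc⟩
    refine ⟨hFE, hflat, fun e he => ?_⟩
    have := hcyc e he
    push_neg at this
    exact (coloop_iff hM).1 this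
  · rintro ⟨hFE, hflat, hcyc⟩
    refine ⟨hFE, hflat, fun e he hall => ?_⟩
    obtain ⟨S, hS, heS⟩ := (coloop_iff hM).2 (hcyc e he)
    exact heS (hall S hS)

lemma empty_mem_cyclicFlats (hM : IsBasisFamily E ℬ)
    (hloopless : ∀ e ∈ E, ∃ B ∈ ℬ, e ∈ B) : (∅ : Finset ℕ) ∈ cyclicFlats E ℬ := by
  rw [mem_cyclicFlats_iff hM]
  refine ⟨Finset.empty_subset E, ⟨Finset.empty_subset E, fun e he hrk => ?_⟩,
    fun e he => absurd he (Finset.notMem_empty e)⟩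
  obtain ⟨B, hB, heB⟩ := hloopless e he
  have h1 : ({e} : Finset ℕ) ∩ B = {e} := Finset.inter_eq_left.2 (Finset.singleton_subset_iff.2 heB)
  have h2 : 1 ≤ famRank ℬ {e} := by
    calc 1 = (({e} : Finset ℕ) ∩ B).card := by rw [h1, Finset.card_singleton]
      _ ≤ _ := card_inter_le_famRank hB
  have hrk' : famRank ℬ {e} = famRank ℬ ∅ := hrk
  rw [hrk', famRank_empty] at h2
  omega

lemma ground_mem_cyclicFlats (hM : IsBasisFamily E ℬ)
    (hcoloopless : ∀ e ∈ E, ∃ B ∈ ℬ, e ∉ B) : E ∈ cyclicFlats E ℬ := by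
  rw [mem_cyclicFlats_iff hM]
  refine ⟨le_refl E, ⟨le_refl E, fun e he _ => he⟩, fun e he => ?_⟩
  obtain ⟨B, hB, heB⟩ := hcoloopless e he
  apply le_antisymm (famRank_mono (Finset.erase_subset _ _))
  calc famRank ℬ E = B.card := famRank_eq_basis_card hM hB
    _ = (E.erase e ∩ B).card := by
        congr 1
        symm
        rw [Finset.inter_eq_right]
        exact fun a ha => Finset.mem_erase.2 ⟨fun h => heB (h ▸ ha), hM.2.1 B hB ha⟩
    _ ≤ famRank ℬ (E.erase e) := card_inter_le_famRank hB

lemma subset_of_mem_cyclicFlats {F : Finset ℕ} (h : F ∈ cyclicFlats E ℬ) : F ⊆ E :=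
  Finset.mem_powerset.1 (Finset.mem_of_mem_filter F h)

/-- cyclic core of a flat -/
lemma exists_core (hM : IsBasisFamily E ℬ) :
    ∀ F : Finset ℕ, IsFlat E ℬ F →
      ∃ m ∈ cyclicFlats E ℬ, m ⊆ F ∧ famRank ℬ m + (F \ m).card = famRank ℬ F := by
  have key : ∀ n (F : Finset ℕ), F.card ≤ n → IsFlat E ℬ F →
      ∃ m ∈ cyclicFlats E ℬ, m ⊆ F ∧ famRank ℬ m + (F \ m).card = famRank ℬ F := by
    intro n
    induction n with
    | zero =>
      intro F hF hflat
      have : F = ∅ := Finset.card_eq_zero.1 (Nat.le_zero.1 hF)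
      subst this
      refine ⟨∅, ?_, le_refl _, by simp⟩
      rw [mem_cyclicFlats_iff hM]
      exact ⟨Finset.empty_subset E, hflat, fun e he => absurd he (Finset.notMem_empty e)⟩
    | succ n ih =>
      intro F hF hflat
      by_cases hcyc : IsCyc ℬ F
      · exact ⟨F, (mem_cyclicFlats_iff hM).2 ⟨hflat.1, hflat, hcyc⟩, le_refl F, by simp⟩
      · unfold IsCyc at hcyc
        push_neg at hcyc
        obtain ⟨e, heF, hne⟩ := hcyc
        have hlt : famRank ℬ (F.erase e) < famRank ℬ F :=
          lt_of_le_of_ne (famRank_mono (Finset.erase_subset _ _)) hne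
        have hge := famRank_erase_ge (ℬ := ℬ) F e heF
        -- F.erase e is a flat
        have hflat' : IsFlat E ℬ (F.erase e) := by
          have h1 : clos E ℬ (F.erase e) ⊆ F := clos_min hM hflat (Finset.erase_subset _ _)
          have h2 : e ∉ clos E ℬ (F.erase e) := by
            intro hmem
            rcases Finset.mem_union.1 hmem with h | h
            · exact (Finset.mem_erase.1 h).1 rfl
            · rw [Finset.mem_filter, Finset.insert_erase heF] at h
              omega
          have h3 : clos E ℬ (F.erase e) = F.erase e := by
            apply le_antisymm _ (subset_clos _)
            intro a ha
            exact Finset.mem_erase.2 ⟨fun h => h2 (h ▸ ha), h1 ha⟩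
          rw [← h3]
          exact clos_isFlat hM ((Finset.erase_subset _ _).trans hflat.1)
        obtain ⟨m, hm, hmsub, hcard⟩ := ih (F.erase e)
          (by rw [Finset.card_erase_of_mem heF]; omega) hflat'
        refine ⟨m, hm, hmsub.trans (Finset.erase_subset _ _), ?_⟩
        have hem : e ∉ m := fun h => (Finset.mem_erase.1 (hmsub h)).1 rfl
        have hsd : F \ m = insert e (F.erase e \ m) := by
          ext a
          simp only [Finset.mem_sdiff, Finset.mem_insert, Finset.mem_erase]
          constructor
          · rintro ⟨haF, ham⟩
            rcases eq_or_ne a e with rfl | hae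
            · exact Or.inl rfl
            · exact Or.inr ⟨⟨hae, haF⟩, ham⟩
          · rintro (rfl | ⟨⟨-, haF⟩, ham⟩)
            · exact ⟨heF, hem⟩
            · exact ⟨haF, ham⟩
        rw [hsd, Finset.card_insert_of_notMem
          (fun h => (Finset.mem_erase.1 (Finset.mem_sdiff.1 h).1).1 rfl)]
        omega
  exact fun F hflat => key F.card F (le_refl _) hflat
end Dev3
section Dev4
open Finset
variable {E : Finset ℕ} {ℬ : Finset (Finset ℕ)}

/-- abstract polymatroid rank function -/
structure PolyRank (rk : Finset ℕ → ℕ) : Prop where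
  empty : rk ∅ = 0
  mono : ∀ ⦃A B : Finset ℕ⦄, A ⊆ B → rk A ≤ rk B
  le_card : ∀ A : Finset ℕ, rk A ≤ A.card
  submod : ∀ A B : Finset ℕ, rk (A ∪ B) + rk (A ∩ B) ≤ rk A + rk B

lemma polyRank_famRank (hM : IsBasisFamily E ℬ) : PolyRank (famRank ℬ) :=
  ⟨famRank_empty, fun _ _ h => famRank_mono h, famRank_le_card, famRank_submod hM⟩

lemma PolyRank.full_of_basis {rk : Finset ℕ → ℕ} (h : PolyRank rk) {B S : Finset ℕ}
    (hB : rk B = B.card) (hS : S ⊆ B) : rk S = S.card := by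
  apply le_antisymm (h.le_card S)
  have hsub := h.submod S (B \ S)
  have hu : S ∪ (B \ S) = B := Finset.union_sdiff_of_subset hS
  have hi : S ∩ (B \ S) = ∅ := by
    ext a; simp only [Finset.mem_inter, Finset.mem_sdiff, Finset.notMem_empty, iff_false]
    tauto
  rw [hu, hi, h.empty] at hsub
  have h1 := h.le_card (B \ S)
  rw [Finset.card_sdiff_of_subset hS] at h1
  have h2 := Finset.card_le_card hS
  omega

/-- membership facts for cyclic chains -/
lemma cyclicChains_facts (hM : IsBasisFamily E ℬ)
    (hloopless : ∀ e ∈ E, ∃ B ∈ ℬ, e ∈ B)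
    (hcoloopless : ∀ e ∈ E, ∃ B ∈ ℬ, e ∉ B)
    {C : Finset (Finset ℕ)} (hC : C ∈ cyclicChains E ℬ) :
    ∅ ∈ C ∧ E ∈ C ∧ C ⊆ cyclicFlats E ℬ ∧ IsChain (· ⊆ ·) (↑C : Set (Finset ℕ)) := by
  have h := Finset.mem_filter.1 hC
  obtain ⟨hsub, hchain, ⟨F1, hF1, hmin⟩, ⟨F2, hF2, hmax⟩⟩ := h.2
  have hsub' : C ⊆ cyclicFlats E ℬ := fun a ha => hsub ha
  have hF1e : F1 = ∅ := Finset.subset_empty.1 (hmin ∅ (empty_mem_cyclicFlats hM hloopless))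
  have hF2e : F2 = E := le_antisymm (subset_of_mem_cyclicFlats (hsub' hF2))
    (hmax E (ground_mem_cyclicFlats hM hcoloopless))
  exact ⟨hF1e ▸ hF1, hF2e ▸ hF2, hsub', hchain⟩

lemma C0_mem_cyclicChains (hM : IsBasisFamily E ℬ)
    (hloopless : ∀ e ∈ E, ∃ B ∈ ℬ, e ∈ B)
    (hcoloopless : ∀ e ∈ E, ∃ B ∈ ℬ, e ∉ B) :
    ({∅, E} : Finset (Finset ℕ)) ∈ cyclicChains E ℬ := by
  have hemp := empty_mem_cyclicFlats hM hloopless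
  have hE := ground_mem_cyclicFlats hM hcoloopless
  have hsub : ({∅, E} : Finset (Finset ℕ)) ⊆ cyclicFlats E ℬ := by
    intro a ha
    rcases Finset.mem_insert.1 ha with rfl | ha
    · exact hemp
    · rw [Finset.mem_singleton.1 ha]; exact hE
  refine Finset.mem_filter.2 ⟨Finset.mem_powerset.2 hsub, hsub, ?_,
    ⟨∅, Finset.mem_insert_self _ _, fun G _ => Finset.empty_subset G⟩,
    ⟨E, Finset.mem_insert_of_mem (Finset.mem_singleton_self E),
      fun G hG => subset_of_mem_cyclicFlats hG⟩⟩
  intro a ha b hb hne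
  simp only [Finset.coe_insert, Set.mem_insert_iff, Finset.coe_singleton,
    Set.mem_singleton_iff] at ha hb
  rcases ha with h1 | h1 <;> rcases hb with h2 | h2
  · exact absurd (h1.trans h2.symm) hne
  · exact Or.inl (by rw [h1, h2]; exact Finset.empty_subset E)
  · exact Or.inr (by rw [h1, h2]; exact Finset.empty_subset E)
  · exact absurd (h1.trans h2.symm) hne

lemma C0_subset_of_mem (hM : IsBasisFamily E ℬ)
    (hloopless : ∀ e ∈ E, ∃ B ∈ ℬ, e ∈ B)
    (hcoloopless : ∀ e ∈ E, ∃ B ∈ ℬ, e ∉ B)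
    {C : Finset (Finset ℕ)} (hC : C ∈ cyclicChains E ℬ) :
    ({∅, E} : Finset (Finset ℕ)) ⊆ C := by
  obtain ⟨h1, h2, -, -⟩ := cyclicChains_facts hM hloopless hcoloopless hC
  intro a ha
  rcases Finset.mem_insert.1 ha with rfl | ha
  · exact h1
  · rw [Finset.mem_singleton.1 ha]; exact h2

lemma chain_between_mem {C D z : Finset (Finset ℕ)} (hC : C ∈ cyclicChains E ℬ)
    (hD : D ∈ cyclicChains E ℬ) (hCz : C ⊆ z) (hzD : z ⊆ D) : z ∈ cyclicChains E ℬ := by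
  have hCf := Finset.mem_filter.1 hC
  have hDf := Finset.mem_filter.1 hD
  obtain ⟨hsubD, hchainD, -, -⟩ := hDf.2
  obtain ⟨-, -, ⟨F1, hF1, hmin⟩, ⟨F2, hF2, hmax⟩⟩ := hCf.2
  refine Finset.mem_filter.2 ⟨Finset.mem_powerset.2 (fun a ha => hsubD (hzD ha)),
    fun a ha => hsubD (hzD ha), hchainD.mono (fun a ha => hzD ha), ⟨F1, hCz hF1, hmin⟩,
    ⟨F2, hCz hF2, hmax⟩⟩

-- chainRank basics
section ChainRank
variable {C : Finset (Finset ℕ)}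

lemma chainRank_le_term (hne : C.Nonempty) {Z : Finset ℕ} (hZ : Z ∈ C) (A : Finset ℕ) :
    chainRank ℬ C A ≤ famRank ℬ Z + (A \ Z).card := by
  unfold chainRank
  rw [dif_pos hne]
  exact Finset.inf'_le _ hZ

lemma le_chainRank (hne : C.Nonempty) {n : ℕ} {A : Finset ℕ}
    (h : ∀ Z ∈ C, n ≤ famRank ℬ Z + (A \ Z).card) : n ≤ chainRank ℬ C A := by
  unfold chainRank
  rw [dif_pos hne]
  exact Finset.le_inf' _ _ h

lemma famRank_le_chainRank (hne : C.Nonempty) (A : Finset ℕ) :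
    famRank ℬ A ≤ chainRank ℬ C A := by
  apply le_chainRank hne
  intro Z hZ
  calc famRank ℬ A ≤ famRank ℬ (Z ∪ (A \ Z)) :=
        famRank_mono (by intro a ha
                         by_cases h : a ∈ Z
                         · exact Finset.mem_union_left _ h
                         · exact Finset.mem_union_right _ (Finset.mem_sdiff.2 ⟨ha, h⟩))
    _ ≤ famRank ℬ Z + (A \ Z).card := famRank_union_le_card _ _

lemma chainRank_le_card (hemp : ∅ ∈ C) (A : Finset ℕ) : chainRank ℬ C A ≤ A.card := by
  have := chainRank_le_term (ℬ := ℬ) ⟨∅, hemp⟩ hemp A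
  rwa [famRank_empty, Finset.sdiff_empty, zero_add] at this

lemma chainRank_empty (hemp : ∅ ∈ C) : chainRank ℬ C ∅ = 0 :=
  Nat.le_zero.1 (by simpa using chainRank_le_card (ℬ := ℬ) hemp ∅)

lemma chainRank_mono (hne : C.Nonempty) {A B : Finset ℕ} (h : A ⊆ B) :
    chainRank ℬ C A ≤ chainRank ℬ C B := by
  apply le_chainRank hne
  intro Z hZ
  calc chainRank ℬ C A ≤ famRank ℬ Z + (A \ Z).card := chainRank_le_term hne hZ A
    _ ≤ famRank ℬ Z + (B \ Z).card := by
        have := Finset.card_le_card (Finset.sdiff_subset_sdiff h (le_refl Z))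
        omega

lemma chainRank_le_famRank (hne : C.Nonempty) {Z : Finset ℕ} (hZ : Z ∈ C) :
    chainRank ℬ C Z ≤ famRank ℬ Z := by
  have := chainRank_le_term (ℬ := ℬ) hne hZ Z
  rwa [Finset.sdiff_self, Finset.card_empty, add_zero] at this

lemma chainRank_self (hne : C.Nonempty) {Z : Finset ℕ} (hZ : Z ∈ C) :
    chainRank ℬ C Z = famRank ℬ Z :=
  le_antisymm (chainRank_le_famRank hne hZ) (famRank_le_chainRank hne Z)

lemma chainRank_submod (hne : C.Nonempty) (hchain : IsChain (· ⊆ ·) (↑C : Set (Finset ℕ)))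
    (A B : Finset ℕ) :
    chainRank ℬ C (A ∪ B) + chainRank ℬ C (A ∩ B) ≤ chainRank ℬ C A + chainRank ℬ C B := by
  have hinf : ∀ X : Finset ℕ, ∃ Z ∈ C, chainRank ℬ C X = famRank ℬ Z + (X \ Z).card := by
    intro X
    unfold chainRank
    rw [dif_pos hne]
    obtain ⟨Z, hZ, hZe⟩ := Finset.exists_mem_eq_inf' hne (fun Z => famRank ℬ Z + (X \ Z).card)
    exact ⟨Z, hZ, hZe⟩
  have key : ∀ A B Z W : Finset ℕ, W ⊆ Z →
      ((A ∪ B) \ Z).card + ((A ∩ B) \ W).card ≤ (A \ Z).card + (B \ W).card := by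
    intro A B Z W hWZ
    have h1 : ((A ∪ B) \ Z) ∪ ((A ∩ B) \ W) ⊆ (A \ Z) ∪ (B \ W) := by
      intro x hx
      rcases Finset.mem_union.1 hx with h | h
      · rw [Finset.mem_sdiff] at h
        rcases Finset.mem_union.1 h.1 with hA | hB
        · exact Finset.mem_union_left _ (Finset.mem_sdiff.2 ⟨hA, h.2⟩)
        · exact Finset.mem_union_right _ (Finset.mem_sdiff.2 ⟨hB, fun hw => h.2 (hWZ hw)⟩)
      · rw [Finset.mem_sdiff, Finset.mem_inter] at h
        exact Finset.mem_union_right _ (Finset.mem_sdiff.2 ⟨h.1.2, h.2⟩)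
    have h2 : ((A ∪ B) \ Z) ∩ ((A ∩ B) \ W) ⊆ (A \ Z) ∩ (B \ W) := by
      intro x hx
      rw [Finset.mem_inter, Finset.mem_sdiff, Finset.mem_sdiff, Finset.mem_inter] at hx
      rw [Finset.mem_inter, Finset.mem_sdiff, Finset.mem_sdiff]
      exact ⟨⟨hx.2.1.1, hx.1.2⟩, ⟨hx.2.1.2, hx.2.2⟩⟩
    have h3 := Finset.card_le_card h1
    have h4 := Finset.card_le_card h2
    have h5 := Finset.card_union_add_card_inter ((A ∪ B) \ Z) ((A ∩ B) \ W)
    have h6 := Finset.card_union_add_card_inter (A \ Z) (B \ W)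
    omega
  obtain ⟨Z, hZ, hZe⟩ := hinf A
  obtain ⟨W, hW, hWe⟩ := hinf B
  have hcase : W ⊆ Z ∨ Z ⊆ W := by
    rcases eq_or_ne Z W with rfl | hne'
    · exact Or.inl (le_refl Z)
    · rcases hchain hZ hW hne' with h | h
      · exact Or.inr h
      · exact Or.inl h
  rcases hcase with h | h
  · have hu := chainRank_le_term (ℬ := ℬ) hne hZ (A ∪ B)
    have hi := chainRank_le_term (ℬ := ℬ) hne hW (A ∩ B)
    have hk := key A B Z W h
    omega
  · have hu := chainRank_le_term (ℬ := ℬ) hne hW (A ∪ B)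
    have hi := chainRank_le_term (ℬ := ℬ) hne hZ (A ∩ B)
    have hk := key B A W Z h
    rw [Finset.union_comm B A, Finset.inter_comm B A] at hk
    omega

lemma polyRank_chainRank (hne : C.Nonempty) (hemp : ∅ ∈ C)
    (hchain : IsChain (· ⊆ ·) (↑C : Set (Finset ℕ))) : PolyRank (chainRank ℬ C) :=
  ⟨chainRank_empty hemp, fun _ _ h => chainRank_mono hne h, chainRank_le_card hemp,
    chainRank_submod hne hchain⟩

end ChainRank

lemma basesOfRank_famRank (hM : IsBasisFamily E ℬ) : basesOfRank E (famRank ℬ) = ℬ := by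
  ext B
  unfold basesOfRank
  simp only [Finset.mem_filter, Finset.mem_powerset]
  constructor
  · rintro ⟨hBE, hrk, hrkE⟩
    obtain ⟨B', hB', hcard⟩ := exists_famRank_inter hM.1 B
    have hsub : B ⊆ B' := by
      have h1 : (B ∩ B').card = B.card := by omega
      have h2 : B ∩ B' ⊆ B := Finset.inter_subset_left
      have := Finset.eq_of_subset_of_card_le h2 (le_of_eq h1.symm)
      intro a ha
      rw [← this] at ha
      exact Finset.mem_of_mem_inter_right ha
    have : B = B' := by
      apply Finset.eq_of_subset_of_card_le hsub
      rw [← famRank_eq_basis_card hM hB', ← hrkE, hrk]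
    exact this ▸ hB'
  · intro hB
    refine ⟨hM.2.1 B hB, ?_, ?_⟩
    · apply le_antisymm (famRank_le_card B)
      calc B.card = (B ∩ B).card := by rw [Finset.inter_self]
        _ ≤ famRank ℬ B := card_inter_le_famRank hB
    · apply le_antisymm (famRank_mono (hM.2.1 B hB))
      rw [famRank_eq_basis_card hM hB]
      calc B.card = (B ∩ B).card := by rw [Finset.inter_self]
        _ ≤ famRank ℬ B := card_inter_le_famRank hB
end Dev4
section Dev5
open Finset
variable {E : Finset ℕ} {ℬ : Finset (Finset ℕ)}

/-- the coordinate of `x` at `n`, or `0` if `n ∉ E`. -/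
noncomputable def xv (E : Finset ℕ) (x : ↑E → ℝ) (n : ℕ) : ℝ :=
  if h : n ∈ E then x ⟨n, h⟩ else 0

/-- sum of the coordinates of `x` over `A`. -/
noncomputable def xs (E : Finset ℕ) (x : ↑E → ℝ) (A : Finset ℕ) : ℝ :=
  ∑ n ∈ A ∩ E, xv E x n

lemma xv_coe (x : ↑E → ℝ) (e : ↑E) : xv E x ↑e = x e := by
  unfold xv
  rw [dif_pos e.2]

lemma xv_nonneg {x : ↑E → ℝ} (h : ∀ e, 0 ≤ x e) (n : ℕ) : 0 ≤ xv E x n := by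
  unfold xv
  split
  · exact h _
  · exact le_refl 0

lemma xv_le_one {x : ↑E → ℝ} (h : ∀ e, x e ≤ 1) (n : ℕ) : xv E x n ≤ 1 := by
  unfold xv
  split
  · exact h _
  · exact zero_le_one

lemma xs_subset (x : ↑E → ℝ) {A : Finset ℕ} (hA : A ⊆ E) : xs E x A = ∑ n ∈ A, xv E x n := by
  unfold xs
  rw [Finset.inter_eq_left.2 hA]

lemma xs_empty (x : ↑E → ℝ) : xs E x ∅ = 0 := by
  unfold xs
  rw [Finset.empty_inter, Finset.sum_empty]

lemma xs_mono {x : ↑E → ℝ} (h0 : ∀ e, 0 ≤ x e) {A B : Finset ℕ} (hAB : A ⊆ B) :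
    xs E x A ≤ xs E x B :=
  Finset.sum_le_sum_of_subset_of_nonneg
    (Finset.inter_subset_inter hAB (le_refl E)) (fun n _ _ => xv_nonneg h0 n)

lemma xs_modular (x : ↑E → ℝ) (A B : Finset ℕ) :
    xs E x (A ∪ B) + xs E x (A ∩ B) = xs E x A + xs E x B := by
  unfold xs
  rw [Finset.union_inter_distrib_right]
  have h2 : (A ∩ B) ∩ E = (A ∩ E) ∩ (B ∩ E) := by
    ext n; simp only [Finset.mem_inter]; tauto
  rw [h2]
  exact Finset.sum_union_inter

lemma xs_le_card {x : ↑E → ℝ} (h1 : ∀ e, x e ≤ 1) (A : Finset ℕ) :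
    xs E x A ≤ A.card := by
  unfold xs
  calc ∑ n ∈ A ∩ E, xv E x n ≤ ∑ _n ∈ A ∩ E, (1 : ℝ) :=
        Finset.sum_le_sum (fun n _ => xv_le_one h1 n)
    _ = (A ∩ E).card := by rw [Finset.sum_const, nsmul_eq_mul, mul_one]
    _ ≤ A.card := by
        have := Finset.card_le_card (Finset.inter_subset_left (s₁ := A) (s₂ := E))
        exact_mod_cast this

lemma sum_zero_one {S : Finset ℕ} {f : ℕ → ℝ} (h : ∀ n ∈ S, f n = 0 ∨ f n = 1) :
    ∑ n ∈ S, f n = ((S.filter (fun n => f n = 1)).card : ℝ) := by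
  rw [← Finset.sum_boole]
  apply Finset.sum_congr rfl
  intro n hn
  rcases h n hn with h0 | h1
  · rw [h0, if_neg (by norm_num)]
  · rw [h1, if_pos rfl]

lemma xs_basisVector {B A : Finset ℕ} (hB : B ⊆ E) (hA : A ⊆ E) :
    xs E (basisVector E B) A = ((A ∩ B).card : ℝ) := by
  rw [xs_subset _ hA]
  have h : ∀ n ∈ A, xv E (basisVector E B) n = if n ∈ B then 1 else 0 := by
    intro n hn
    unfold xv basisVector
    rw [dif_pos (hA hn)]
  rw [Finset.sum_congr rfl h, Finset.sum_boole, Finset.filter_mem_eq_inter]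

/-- the polymatroid base polytope, described by inequalities. -/
def polySet (E : Finset ℕ) (rk : Finset ℕ → ℕ) : Set (↑E → ℝ) :=
  {x | (∀ e, 0 ≤ x e ∧ x e ≤ 1) ∧ xs E x E = (rk E : ℝ) ∧
    ∀ A ⊆ E, xs E x A ≤ (rk A : ℝ)}

lemma basisVector_mem_polySet {rk : Finset ℕ → ℕ} (hrk : PolyRank rk) {B : Finset ℕ}
    (hB : B ∈ basesOfRank E rk) : basisVector E B ∈ polySet E rk := by
  unfold basesOfRank at hB
  simp only [Finset.mem_filter, Finset.mem_powerset] at hB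
  obtain ⟨hBE, hrkB, hrkE⟩ := hB
  refine ⟨fun e => ?_, ?_, fun A hA => ?_⟩
  · unfold basisVector
    split <;> norm_num
  · rw [xs_basisVector hBE (le_refl E), Finset.inter_eq_right.2 hBE, ← hrkE, hrkB]
  · rw [xs_basisVector hBE hA]
    have h1 : rk (A ∩ B) = (A ∩ B).card := hrk.full_of_basis hrkB Finset.inter_subset_right
    have h2 : rk (A ∩ B) ≤ rk A := hrk.mono Finset.inter_subset_left
    exact_mod_cast h1 ▸ h2

lemma convex_polySet (E : Finset ℕ) (rk : Finset ℕ → ℕ) : Convex ℝ (polySet E rk) := by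
  intro x hx y hy a b ha hb hab
  have hxv : ∀ n, xv E (a • x + b • y) n = a * xv E x n + b * xv E y n := by
    intro n
    unfold xv
    split
    · simp [Pi.add_apply, Pi.smul_apply, smul_eq_mul]
    · ring
  have hxs : ∀ A, xs E (a • x + b • y) A = a * xs E x A + b * xs E y A := by
    intro A
    unfold xs
    rw [Finset.mul_sum, Finset.mul_sum, ← Finset.sum_add_distrib]
    exact Finset.sum_congr rfl (fun n _ => hxv n)
  refine ⟨fun e => ?_, ?_, fun A hA => ?_⟩
  · have h1 := (hx.1 e).1
    have h2 := (hy.1 e).1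
    have h3 := (hx.1 e).2
    have h4 := (hy.1 e).2
    constructor
    · have : (a • x + b • y) e = a * x e + b * y e := by
        simp [Pi.add_apply, Pi.smul_apply, smul_eq_mul]
      rw [this]
      positivity
    · have : (a • x + b • y) e = a * x e + b * y e := by
        simp [Pi.add_apply, Pi.smul_apply, smul_eq_mul]
      rw [this]
      calc a * x e + b * y e ≤ a * 1 + b * 1 := by
            apply add_le_add (mul_le_mul_of_nonneg_left h3 ha) (mul_le_mul_of_nonneg_left h4 hb)
        _ = 1 := by rw [mul_one, mul_one, hab]
  · rw [hxs, hx.2.1, hy.2.1, ← add_mul, hab, one_mul]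
  · rw [hxs]
    calc a * xs E x A + b * xs E y A ≤ a * rk A + b * rk A := by
          apply add_le_add (mul_le_mul_of_nonneg_left (hx.2.2 A hA) ha)
            (mul_le_mul_of_nonneg_left (hy.2.2 A hA) hb)
      _ = rk A := by rw [← add_mul, hab, one_mul]

lemma hull_subset_polySet {rk : Finset ℕ → ℕ} (hrk : PolyRank rk) :
    basePolytope E (basesOfRank E rk) ⊆ polySet E rk := by
  apply convexHull_min _ (convex_polySet E rk)
  rintro y ⟨B, hB, rfl⟩
  exact basisVector_mem_polySet hrk hB

lemma continuous_xs (E : Finset ℕ) (A : Finset ℕ) : Continuous (fun x : ↑E → ℝ => xs E x A) := by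
  unfold xs
  apply continuous_finset_sum
  intro n _
  unfold xv
  split
  · exact continuous_apply _
  · exact continuous_const

lemma isClosed_polySet (E : Finset ℕ) (rk : Finset ℕ → ℕ) : IsClosed (polySet E rk) := by
  have h1 : polySet E rk = (⋂ e : ↑E, {x : ↑E → ℝ | 0 ≤ x e ∧ x e ≤ 1}) ∩
      ({x | xs E x E = (rk E : ℝ)} ∩ ⋂ A ∈ E.powerset, {x | xs E x A ≤ (rk A : ℝ)}) := by
    ext x
    simp only [polySet, Set.mem_inter_iff, Set.mem_iInter, Set.mem_setOf_eq, Finset.mem_powerset]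
  rw [h1]
  apply IsClosed.inter
  · exact isClosed_iInter fun e => IsClosed.inter
      (isClosed_le continuous_const (continuous_apply e))
      (isClosed_le (continuous_apply e) continuous_const)
  · apply IsClosed.inter
    · exact isClosed_eq (continuous_xs E E) continuous_const
    · exact isClosed_biInter fun A _ => isClosed_le (continuous_xs E A) continuous_const

lemma isCompact_polySet (E : Finset ℕ) (rk : Finset ℕ → ℕ) : IsCompact (polySet E rk) := by
  apply IsCompact.of_isClosed_subset (isCompact_univ_pi (fun _ : ↑E => isCompact_Icc (a := (0:ℝ)) (b := 1)))
    (isClosed_polySet E rk)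
  intro x hx
  rw [Set.mem_univ_pi]
  exact fun e => Set.mem_Icc.2 (hx.1 e)
end Dev5
section Dev6
open Finset
variable {E : Finset ℕ} {ℬ : Finset (Finset ℕ)} {rk : Finset ℕ → ℕ}

/-- perturbation direction -/
noncomputable def pert (E : Finset ℕ) (i j : ℕ) (ε : ℝ) : ↑E → ℝ :=
  fun f => if (f : ℕ) = i then ε else if (f : ℕ) = j then -ε else 0

lemma xv_pert {i j : ℕ} {ε : ℝ} {n : ℕ} (hn : n ∈ E) :
    xv E (pert E i j ε) n = if n = i then ε else if n = j then -ε else 0 := by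
  unfold xv
  rw [dif_pos hn]
  rfl

lemma tight_inter_union (hrk : PolyRank rk) {x : ↑E → ℝ} (hx : x ∈ polySet E rk)
    {A B : Finset ℕ} (hA : A ⊆ E) (hB : B ⊆ E)
    (htA : xs E x A = (rk A : ℝ)) (htB : xs E x B = (rk B : ℝ)) :
    xs E x (A ∪ B) = (rk (A ∪ B) : ℝ) ∧ xs E x (A ∩ B) = (rk (A ∩ B) : ℝ) := by
  have h1 := hx.2.2 (A ∪ B) (Finset.union_subset hA hB)
  have h2 := hx.2.2 (A ∩ B) (Finset.inter_subset_left.trans hA)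
  have h3 := xs_modular x A B
  have h4 : ((rk (A ∪ B) : ℝ) + (rk (A ∩ B) : ℝ)) ≤ (rk A : ℝ) + (rk B : ℝ) := by
    exact_mod_cast hrk.submod A B
  constructor <;> linarith

lemma tight_frac_pair {x : ↑E → ℝ} (hbox : ∀ e, 0 ≤ x e ∧ x e ≤ 1)
    {A : Finset ℕ} (hA : A ⊆ E) (ht : xs E x A = (rk A : ℝ)) {i : ℕ} (hiA : i ∈ A)
    (hi : 0 < xv E x i ∧ xv E x i < 1) :
    ∃ j ∈ A, j ≠ i ∧ 0 < xv E x j ∧ xv E x j < 1 := by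
  by_contra hcon
  push_neg at hcon
  have hint : ∀ n ∈ A.erase i, xv E x n = 0 ∨ xv E x n = 1 := by
    intro n hn
    rw [Finset.mem_erase] at hn
    have h0 : 0 ≤ xv E x n := xv_nonneg (fun e => (hbox e).1) n
    have h1 : xv E x n ≤ 1 := xv_le_one (fun e => (hbox e).2) n
    rcases eq_or_lt_of_le h0 with h | h
    · exact Or.inl h.symm
    · right
      have := hcon n hn.2 hn.1 h
      linarith
  have hsplit : xs E x A = xv E x i + ∑ n ∈ A.erase i, xv E x n := by
    rw [xs_subset x hA, ← Finset.add_sum_erase A _ hiA]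
  have hc := sum_zero_one hint
  set c := ((A.erase i).filter (fun n => xv E x n = 1)).card with hcdef
  have h5 : (rk A : ℝ) = xv E x i + c := by rw [← ht, hsplit, hc]
  have hlt1 : (c : ℝ) < (rk A : ℝ) := by linarith [hi.1]
  have hlt2 : (rk A : ℝ) < (c : ℝ) + 1 := by linarith [hi.2]
  have hn1 : c < rk A := by exact_mod_cast hlt1
  have hn2 : (rk A : ℝ) < ((c + 1 : ℕ) : ℝ) := by push_cast; linarith
  have hn2' : rk A < c + 1 := by exact_mod_cast hn2
  omega

lemma extreme_zero_one (hrk : PolyRank rk)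
    {x : ↑E → ℝ} (hx : x ∈ (polySet E rk).extremePoints ℝ) (e : ↑E) :
    x e = 0 ∨ x e = 1 := by
  obtain ⟨hxQ, hext⟩ := hx
  by_contra hcon
  push_neg at hcon
  obtain ⟨h0, h1⟩ := hxQ.1 e
  have hfrac_e : 0 < x e ∧ x e < 1 :=
    ⟨lt_of_le_of_ne h0 (Ne.symm hcon.1), lt_of_le_of_ne h1 hcon.2⟩
  set Tight := E.powerset.filter (fun A => xs E x A = (rk A : ℝ)) with hTight
  have hTmem : ∀ {A : Finset ℕ}, A ∈ Tight ↔ A ⊆ E ∧ xs E x A = (rk A : ℝ) := fun {A} => by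
    rw [hTight, Finset.mem_filter, Finset.mem_powerset]
  set Frac := E.filter (fun n => 0 < xv E x n ∧ xv E x n < 1) with hFrac
  have hiFrac : (e : ℕ) ∈ Frac := by
    rw [hFrac, Finset.mem_filter]
    refine ⟨e.2, ?_⟩
    rw [xv_coe]
    exact hfrac_e
  set S := Tight.filter (fun A => (A ∩ Frac).Nonempty) with hSdef
  have hES : E ∈ S := by
    rw [hSdef, Finset.mem_filter]
    exact ⟨hTmem.2 ⟨le_refl E, hxQ.2.1⟩, ⟨e, Finset.mem_inter.2 ⟨e.2, hiFrac⟩⟩⟩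
  obtain ⟨T, hTS, hTmin⟩ := Finset.exists_min_image S Finset.card ⟨E, hES⟩
  rw [hSdef, Finset.mem_filter] at hTS
  obtain ⟨hTt, i, hiT⟩ := hTS
  rw [Finset.mem_inter] at hiT
  have hTE : T ⊆ E := (hTmem.1 hTt).1
  have hTtight : xs E x T = (rk T : ℝ) := (hTmem.1 hTt).2
  have hiF := Finset.mem_filter.1 hiT.2
  obtain ⟨j, hjT, hji, hjF0, hjF1⟩ := tight_frac_pair hxQ.1 hTE hTtight hiT.1 hiF.2
  have hjF : 0 < xv E x j ∧ xv E x j < 1 := ⟨hjF0, hjF1⟩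
  have hjFrac : j ∈ Frac := Finset.mem_filter.2 ⟨hTE hjT, hjF⟩
  -- no tight set separates i from j
  have hsep : ∀ A ∈ Tight, (i ∈ A ↔ j ∈ A) := by
    intro A hA
    have hAE := (hTmem.1 hA).1
    have hAtight := (hTmem.1 hA).2
    by_contra hiff
    have hTi := tight_inter_union hrk hxQ hAE hTE hAtight hTtight
    have hint : xs E x (A ∩ T) = (rk (A ∩ T) : ℝ) := hTi.2
    have hintS_mem : ∀ k, k ∈ T → k ∈ Frac → k ∈ A → A ∩ T ∈ S := by
      intro k hkT hkF hkA
      rw [hSdef, Finset.mem_filter]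
      exact ⟨hTmem.2 ⟨Finset.inter_subset_left.trans hAE, hint⟩,
        ⟨k, by rw [Finset.mem_inter, Finset.mem_inter]; exact ⟨⟨hkA, hkT⟩, hkF⟩⟩⟩
    have hcases : (i ∈ A ∧ j ∉ A) ∨ (i ∉ A ∧ j ∈ A) := by tauto
    rcases hcases with ⟨hiA, hjA⟩ | ⟨hiA, hjA⟩
    · have hmem := hintS_mem i hiT.1 hiT.2 hiA
      have hlt : (A ∩ T).card < T.card := Finset.card_lt_card
        ⟨Finset.inter_subset_right, fun hsub => hjA (Finset.mem_of_mem_inter_left (hsub hjT))⟩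
      have := hTmin _ hmem
      omega
    · have hmem := hintS_mem j hjT hjFrac hjA
      have hlt : (A ∩ T).card < T.card := Finset.card_lt_card
        ⟨Finset.inter_subset_right, fun hsub => hiA (Finset.mem_of_mem_inter_left (hsub hiT.1))⟩
      have := hTmin _ hmem
      omega
  -- the slack
  set NT := E.powerset.filter (fun A => xs E x A ≠ (rk A : ℝ)) with hNT
  have hslack : ∀ A ∈ NT, 0 < (rk A : ℝ) - xs E x A := by
    intro A hA
    rw [hNT, Finset.mem_filter, Finset.mem_powerset] at hA
    have := hxQ.2.2 A hA.1
    rcases lt_or_eq_of_le this with h | h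
    · linarith
    · exact absurd h hA.2
  have hxvi := hiF.2
  have hxvj := hjF
  set ε₀ := min (min (xv E x i) (1 - xv E x i)) (min (xv E x j) (1 - xv E x j)) with hε₀
  have hε₀pos : 0 < ε₀ := by
    apply lt_min (lt_min hxvi.1 (by linarith [hxvi.2])) (lt_min hxvj.1 (by linarith [hxvj.2]))
  set ε := if h : NT.Nonempty then min ε₀ (NT.inf' h (fun A => (rk A : ℝ) - xs E x A)) else ε₀
    with hεdef
  have hεpos : 0 < ε := by
    rw [hεdef]
    split
    · next h =>
      apply lt_min hε₀pos
      rw [Finset.lt_inf'_iff]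
      exact fun A hA => hslack A hA
    · exact hε₀pos
  have hεle : ∀ A ∈ NT, ε ≤ (rk A : ℝ) - xs E x A := by
    intro A hA
    rw [hεdef, dif_pos ⟨A, hA⟩]
    exact le_trans (min_le_right _ _) (Finset.inf'_le _ hA)
  have hεε₀ : ε ≤ ε₀ := by
    rw [hεdef]
    split
    · exact min_le_left _ _
    · exact le_refl _
  have hεi : ε ≤ xv E x i := le_trans hεε₀ (le_trans (min_le_left _ _) (min_le_left _ _))
  have hεi' : ε ≤ 1 - xv E x i := le_trans hεε₀ (le_trans (min_le_left _ _) (min_le_right _ _))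
  have hεj : ε ≤ xv E x j := le_trans hεε₀ (le_trans (min_le_right _ _) (min_le_left _ _))
  have hεj' : ε ≤ 1 - xv E x j := le_trans hεε₀ (le_trans (min_le_right _ _) (min_le_right _ _))
  -- the perturbation direction
  have hij : j ≠ i := hji
  set d : ↑E → ℝ := pert E i j ε with hd
  have hdv : ∀ n ∈ E, xv E d n = (if n = i then ε else 0) + (if n = j then -ε else 0) := by
    intro n hn
    rw [hd, xv_pert hn]
    by_cases h1 : n = i
    · rw [if_pos h1, if_pos h1, if_neg (fun h2 => hij (h2.symm.trans h1)), add_zero]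
    · rw [if_neg h1, if_neg h1, zero_add]
  have hxsd : ∀ A ⊆ E, xs E d A = (if i ∈ A then ε else 0) + (if j ∈ A then -ε else 0) := by
    intro A hA
    rw [xs_subset d hA, Finset.sum_congr rfl (fun n hn => hdv n (hA hn)),
      Finset.sum_add_distrib, Finset.sum_ite_eq' A i (fun _ => ε),
      Finset.sum_ite_eq' A j (fun _ => -ε)]
  have hdtight : ∀ A ∈ Tight, xs E d A = 0 := by
    intro A hA
    rw [hxsd A (hTmem.1 hA).1]
    have hiff := hsep A hA
    by_cases h : i ∈ A
    · rw [if_pos h, if_pos (hiff.1 h)]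
      ring
    · rw [if_neg h, if_neg (fun hj => h (hiff.2 hj))]
      ring
  have hdabs : ∀ A ⊆ E, |xs E d A| ≤ ε := by
    intro A hA
    rw [hxsd A hA, abs_le]
    constructor <;> (split_ifs <;> push_cast <;> linarith)
  -- linearity of xs in x
  have hxv_lin : ∀ (σ : ℝ) (n : ℕ), xv E (x + σ • d) n = xv E x n + σ * xv E d n := by
    intro σ n
    unfold xv
    split
    · simp [Pi.add_apply, Pi.smul_apply, smul_eq_mul]
    · ring
  have hxs_lin : ∀ (σ : ℝ) (A : Finset ℕ), xs E (x + σ • d) A = xs E x A + σ * xs E d A := by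
    intro σ A
    unfold xs
    rw [Finset.mul_sum, ← Finset.sum_add_distrib]
    exact Finset.sum_congr rfl (fun n _ => hxv_lin σ n)
  -- the perturbed points lie in the polytope
  have key : ∀ σ : ℝ, |σ| ≤ 1 → x + σ • d ∈ polySet E rk := by
    intro σ hσ
    rw [abs_le] at hσ
    have hσε1 : σ * ε ≤ ε := by
      have h9 := mul_le_mul_of_nonneg_right hσ.2 (le_of_lt hεpos)
      rw [one_mul] at h9
      exact h9
    have hσε2 : -ε ≤ σ * ε := by
      have h9 := mul_le_mul_of_nonneg_right hσ.1 (le_of_lt hεpos)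
      rw [neg_one_mul] at h9
      exact h9
    refine ⟨fun f => ?_, ?_, fun A hA => ?_⟩
    · have hf : (x + σ • d) f = x f + σ * d f := by
        simp [Pi.add_apply, Pi.smul_apply, smul_eq_mul]
      rw [hf]
      have hxf : x f = xv E x ↑f := (xv_coe x f).symm
      have hbox := hxQ.1 f
      rcases eq_or_ne (f : ℕ) i with hfi | hfi
      · have hdf : d f = ε := by rw [hd]; unfold pert; rw [if_pos hfi]
        rw [hdf, hxf, hfi]
        constructor <;> linarith [hεi, hεi']
      · rcases eq_or_ne (f : ℕ) j with hfj | hfj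
        · have hdf : d f = -ε := by rw [hd]; unfold pert; rw [if_neg hfi, if_pos hfj]
          rw [hdf, hxf, hfj]
          have h9 : σ * -ε = -(σ * ε) := by ring
          rw [h9]
          constructor <;> linarith [hεj, hεj']
        · have hdf : d f = 0 := by rw [hd]; unfold pert; rw [if_neg hfi, if_neg hfj]
          rw [hdf, mul_zero, add_zero]
          exact hbox
    · rw [hxs_lin, hdtight E (hTmem.2 ⟨le_refl E, hxQ.2.1⟩), mul_zero, add_zero]
      exact hxQ.2.1
    · rw [hxs_lin]
      by_cases hAt : A ∈ Tight
      · rw [hdtight A hAt, mul_zero, add_zero]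
        exact hxQ.2.2 A hA
      · have hANT : A ∈ NT := by
          rw [hNT, Finset.mem_filter, Finset.mem_powerset]
          refine ⟨hA, fun h => hAt (hTmem.2 ⟨hA, h⟩)⟩
        have h6 := hεle A hANT
        have h7 := hdabs A hA
        have h8 : σ * xs E d A ≤ |xs E d A| := by
          calc σ * xs E d A ≤ |σ * xs E d A| := le_abs_self _
            _ = |σ| * |xs E d A| := abs_mul _ _
            _ ≤ 1 * |xs E d A| := by
                apply mul_le_mul_of_nonneg_right _ (abs_nonneg _)
                rw [abs_le]; exact hσ
            _ = |xs E d A| := one_mul _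
        linarith
  have hy := key 1 (by norm_num)
  have hz := key (-1) (by norm_num)
  have hseg : x ∈ openSegment ℝ (x + (1:ℝ) • d) (x + (-1:ℝ) • d) := by
    refine ⟨1/2, 1/2, by norm_num, by norm_num, by norm_num, ?_⟩
    funext f
    simp only [Pi.add_apply, Pi.smul_apply, smul_eq_mul]
    ring
  have hcontra := hext hy hz hseg
  have hiE : i ∈ E := hTE hiT.1
  have := congrFun hcontra ⟨i, hiE⟩
  have hdi : d ⟨i, hiE⟩ = ε := by rw [hd]; unfold pert; exact if_pos rfl
  simp only [Pi.add_apply, Pi.smul_apply, smul_eq_mul, one_mul] at this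
  rw [hdi] at this
  have : ε = 0 := by linarith [this]
  exact absurd this (ne_of_gt hεpos)

lemma extremePoints_subset_vectors (hrk : PolyRank rk) :
    (polySet E rk).extremePoints ℝ ⊆ basisVector E '' ↑(basesOfRank E rk) := by
  intro x hx
  have hint := fun e => extreme_zero_one hrk hx e
  have hxQ : x ∈ polySet E rk := hx.1
  set B := E.filter (fun n => xv E x n = 1) with hB
  have hBE : B ⊆ E := Finset.filter_subset _ _
  have hxeq : x = basisVector E B := by
    funext f
    unfold basisVector
    by_cases h : (f : ℕ) ∈ B
    · rw [if_pos h]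
      have := (Finset.mem_filter.1 h).2
      rwa [xv_coe] at this
    · rw [if_neg h]
      rcases hint f with h0 | h1
      · exact h0
      · exact absurd (Finset.mem_filter.2 ⟨f.2, by rwa [xv_coe]⟩) h
  have hsum : ∀ A ⊆ E, xs E x A = ((A ∩ B).card : ℝ) := by
    intro A hA
    rw [hxeq]
    exact xs_basisVector hBE hA
  have hcardE : ((E ∩ B).card : ℝ) = (rk E : ℝ) := by
    rw [← hsum E (le_refl E)]
    exact hxQ.2.1
  have hEB : E ∩ B = B := Finset.inter_eq_right.2 hBE
  have hcardE' : B.card = rk E := by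
    rw [hEB] at hcardE
    exact_mod_cast hcardE
  have hrkB_ge : (B.card : ℝ) ≤ (rk B : ℝ) := by
    have h := hxQ.2.2 B hBE
    rw [hsum B hBE, Finset.inter_self] at h
    exact h
  have hrkB : rk B = B.card := le_antisymm (hrk.le_card B) (by exact_mod_cast hrkB_ge)
  refine ⟨B, ?_, hxeq.symm⟩
  unfold basesOfRank
  rw [Finset.mem_coe, Finset.mem_filter, Finset.mem_powerset]
  exact ⟨hBE, hrkB, by rw [hrkB, hcardE']⟩

lemma polySet_subset_hull (hrk : PolyRank rk) :
    polySet E rk ⊆ basePolytope E (basesOfRank E rk) := by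
  intro x hx
  have hKM := closure_convexHull_extremePoints (isCompact_polySet E rk) (convex_polySet E rk)
  have h1 : x ∈ closure (convexHull ℝ ((polySet E rk).extremePoints ℝ)) := by
    rw [hKM]; exact hx
  have h2 : closure (convexHull ℝ ((polySet E rk).extremePoints ℝ)) ⊆
      closure (convexHull ℝ (basisVector E '' ↑(basesOfRank E rk))) :=
    closure_mono (convexHull_mono (extremePoints_subset_vectors hrk))
  have h3 : IsClosed (convexHull ℝ (basisVector E '' ↑(basesOfRank E rk))) :=
    Set.Finite.isClosed_convexHull ℝ ((basesOfRank E rk).finite_toSet.image _)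
  have h4 := h2 h1
  rwa [h3.closure_eq] at h4

lemma mem_basePolytope_iff (hrk : PolyRank rk) (x : ↑E → ℝ) :
    x ∈ basePolytope E (basesOfRank E rk) ↔ x ∈ polySet E rk :=
  ⟨fun h => hull_subset_polySet hrk h, fun h => polySet_subset_hull hrk h⟩
end Dev6
section Dev7
open Finset
variable {E : Finset ℕ} {ℬ : Finset (Finset ℕ)}

lemma xs_le_famRank_flat (hM : IsBasisFamily E ℬ) {x : ↑E → ℝ}
    (hbox : ∀ e, 0 ≤ x e ∧ x e ≤ 1)
    (hcf : ∀ Z ∈ cyclicFlats E ℬ, xs E x Z ≤ (famRank ℬ Z : ℝ))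
    {F : Finset ℕ} (hF : IsFlat E ℬ F) : xs E x F ≤ (famRank ℬ F : ℝ) := by
  obtain ⟨m, hm, hmF, hcard⟩ := exists_core hM F hF
  have hmod := xs_modular x m (F \ m)
  have hu : m ∪ (F \ m) = F := Finset.union_sdiff_of_subset hmF
  have hi : m ∩ (F \ m) = ∅ := by
    ext a
    simp only [Finset.mem_inter, Finset.mem_sdiff, Finset.notMem_empty, iff_false]
    tauto
  rw [hu, hi, xs_empty] at hmod
  have h1 : xs E x m ≤ (famRank ℬ m : ℝ) := hcf m hm
  have h2 : xs E x (F \ m) ≤ ((F \ m).card : ℝ) := xs_le_card (fun e => (hbox e).2) _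
  have h3 : (famRank ℬ m : ℝ) + ((F \ m).card : ℝ) = (famRank ℬ F : ℝ) := by
    exact_mod_cast congrArg (Nat.cast : ℕ → ℝ) hcard
  linarith

lemma xs_le_famRank_of_cyclic (hM : IsBasisFamily E ℬ) {x : ↑E → ℝ}
    (hbox : ∀ e, 0 ≤ x e ∧ x e ≤ 1)
    (hcf : ∀ Z ∈ cyclicFlats E ℬ, xs E x Z ≤ (famRank ℬ Z : ℝ)) :
    ∀ A ⊆ E, xs E x A ≤ (famRank ℬ A : ℝ) := by
  intro A hA
  calc xs E x A ≤ xs E x (clos E ℬ A) := xs_mono (fun e => (hbox e).1) (subset_clos A)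
    _ ≤ (famRank ℬ (clos E ℬ A) : ℝ) := xs_le_famRank_flat hM hbox hcf (clos_isFlat hM hA)
    _ = (famRank ℬ A : ℝ) := by rw [famRank_clos hM A]

lemma mem_polySet_famRank_iff (hM : IsBasisFamily E ℬ) (x : ↑E → ℝ) :
    x ∈ polySet E (famRank ℬ) ↔ ((∀ e, 0 ≤ x e ∧ x e ≤ 1) ∧ xs E x E = (famRank ℬ E : ℝ) ∧
      ∀ Z ∈ cyclicFlats E ℬ, xs E x Z ≤ (famRank ℬ Z : ℝ)) := by
  constructor
  · rintro ⟨hbox, hE, hA⟩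
    exact ⟨hbox, hE, fun Z hZ => hA Z (subset_of_mem_cyclicFlats hZ)⟩
  · rintro ⟨hbox, hE, hcf⟩
    exact ⟨hbox, hE, xs_le_famRank_of_cyclic hM hbox hcf⟩

lemma mem_polySet_chainRank_iff (hM : IsBasisFamily E ℬ)
    {C : Finset (Finset ℕ)} (hemp : ∅ ∈ C) (hE : E ∈ C)
    (hsub : C ⊆ cyclicFlats E ℬ) (x : ↑E → ℝ) :
    x ∈ polySet E (chainRank ℬ C) ↔ ((∀ e, 0 ≤ x e ∧ x e ≤ 1) ∧
      xs E x E = (famRank ℬ E : ℝ) ∧ ∀ Z ∈ C, xs E x Z ≤ (famRank ℬ Z : ℝ)) := by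
  have hne : C.Nonempty := ⟨∅, hemp⟩
  have hrkE : chainRank ℬ C E = famRank ℬ E := chainRank_self hne hE
  constructor
  · rintro ⟨hbox, hEq, hA⟩
    refine ⟨hbox, by rw [← hrkE]; exact hEq, fun Z hZ => ?_⟩
    calc xs E x Z ≤ (chainRank ℬ C Z : ℝ) := hA Z (subset_of_mem_cyclicFlats (hsub hZ))
      _ = (famRank ℬ Z : ℝ) := by rw [chainRank_self hne hZ]
  · rintro ⟨hbox, hEq, hcf⟩
    refine ⟨hbox, by rw [hrkE]; exact hEq, fun A hA => ?_⟩
    unfold chainRank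
    rw [dif_pos hne]
    obtain ⟨Z, hZ, hZe⟩ := Finset.exists_mem_eq_inf' hne (fun Z => famRank ℬ Z + (A \ Z).card)
    rw [hZe]
    have hmod := xs_modular x (A ∩ Z) (A \ Z)
    have hu : (A ∩ Z) ∪ (A \ Z) = A := by
      ext a
      simp only [Finset.mem_union, Finset.mem_inter, Finset.mem_sdiff]
      tauto
    have hi : (A ∩ Z) ∩ (A \ Z) = ∅ := by
      ext a
      simp only [Finset.mem_inter, Finset.mem_sdiff, Finset.notMem_empty, iff_false]
      tauto
    rw [hu, hi, xs_empty] at hmod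
    have h1 : xs E x (A ∩ Z) ≤ (famRank ℬ Z : ℝ) :=
      le_trans (xs_mono (fun e => (hbox e).1) Finset.inter_subset_right) (hcf Z hZ)
    have h2 : xs E x (A \ Z) ≤ ((A \ Z).card : ℝ) := xs_le_card (fun e => (hbox e).2) _
    push_cast
    linarith

lemma basePolytope_eq (hM : IsBasisFamily E ℬ) :
    basePolytope E ℬ = basePolytope E (basesOfRank E (famRank ℬ)) := by
  rw [basesOfRank_famRank hM]
end Dev7
section Dev8
open Finset

lemma chain_sup_mem {S : Finset (Finset ℕ)} (hS : S.Nonempty)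
    (hchain : IsChain (· ⊆ ·) (↑S : Set (Finset ℕ))) :
    S.sup id ∈ S ∧ ∀ y ∈ S, y ⊆ S.sup id := by
  have hle : ∀ y ∈ S, y ⊆ S.sup id := fun y hy => Finset.le_sup (f := id) hy
  obtain ⟨a, haS, hamax⟩ := Finset.exists_max_image S Finset.card hS
  have heq : S.sup id = a := by
    apply le_antisymm _ (hle a haS)
    apply Finset.sup_le
    intro y hy
    rcases eq_or_ne y a with rfl | hne
    · exact le_refl _
    · rcases hchain hy haS hne with h | h
      · exact h
      · have heq2 := Finset.eq_of_subset_of_card_le h (hamax y hy)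
        rw [heq2]
        exact le_refl _
  rw [heq]
  exact ⟨haS, fun y hy => heq ▸ hle y hy⟩

/-- the pivot element for the sign-reversing involution on chains -/
noncomputable def chainPivot (t : Finset ℕ) (j : Finset ℕ → Finset ℕ)
    (T : Finset (Finset ℕ)) : Finset ℕ :=
  if (T.filter (fun a => ¬ t ⊆ a)).Nonempty then j ((T.filter (fun a => ¬ t ⊆ a)).sup id) else t

/-- the sign-reversing involution on chains -/
noncomputable def chainInvol (t : Finset ℕ) (j : Finset ℕ → Finset ℕ)
    (T : Finset (Finset ℕ)) : Finset (Finset ℕ) :=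
  if chainPivot t j T ∈ T then T.erase (chainPivot t j T) else insert (chainPivot t j T) T

lemma signed_chain_sum_zero (Y : Finset (Finset ℕ)) (t : Finset ℕ) (ht : t ∈ Y)
    (j : Finset ℕ → Finset ℕ)
    (hj : ∀ a ∈ Y, ¬ t ⊆ a →
      j a ∈ Y ∧ t ⊆ j a ∧ a ⊆ j a ∧ ∀ u ∈ Y, t ⊆ u → a ⊆ u → j a ⊆ u) :
    ∑ T ∈ Y.powerset.filter
        (fun T : Finset (Finset ℕ) => IsChain (· ⊆ ·) (↑T : Set (Finset ℕ))),
      (-1 : ℤ) ^ T.card = 0 := by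
  set s : Finset (Finset (Finset ℕ)) :=
    Y.powerset.filter
      (fun T : Finset (Finset ℕ) => IsChain (· ⊆ ·) (↑T : Set (Finset ℕ))) with hs
  have hmem : ∀ {T : Finset (Finset ℕ)},
      T ∈ s ↔ T ⊆ Y ∧ IsChain (· ⊆ ·) (↑T : Set (Finset ℕ)) := fun {T} => by
    rw [hs, Finset.mem_filter, Finset.mem_powerset]
  -- properties of the pivot
  have pivot_spec : ∀ T ∈ s, (t ⊆ chainPivot t j T ∧ chainPivot t j T ∈ Y) ∧
      ∀ y ∈ T, y ⊆ chainPivot t j T ∨ chainPivot t j T ⊆ y := by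
    intro T hT
    obtain ⟨hTY, hTchain⟩ := hmem.1 hT
    unfold chainPivot
    split
    · next hne =>
      set S := T.filter (fun a => ¬ t ⊆ a) with hSdef
      have hSchain : IsChain (· ⊆ ·) (↑S : Set (Finset ℕ)) :=
        hTchain.mono (fun a ha => Finset.mem_coe.2 (Finset.mem_of_mem_filter _ (Finset.mem_coe.1 ha)))
      obtain ⟨haS, hamax⟩ := chain_sup_mem hne hSchain
      set a := S.sup id with hadef
      have haT : a ∈ T := Finset.mem_of_mem_filter _ haS
      have hta : ¬ t ⊆ a := (Finset.mem_filter.1 haS).2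
      obtain ⟨hjY, htj, haj, hjmin⟩ := hj a (hTY haT) hta
      refine ⟨⟨htj, hjY⟩, fun y hy => ?_⟩
      by_cases hty : t ⊆ y
      · right
        have hya : a ⊆ y := by
          rcases eq_or_ne y a with rfl | hne'
          · exact absurd hty hta
          · rcases hTchain hy haT hne' with h | h
            · exact absurd (hty.trans h) hta
            · exact h
        exact hjmin y (hTY hy) hty hya
      · left
        exact (hamax y (Finset.mem_filter.2 ⟨hy, hty⟩)).trans haj
    · next hne =>
      refine ⟨⟨le_refl t, ht⟩, fun y hy => ?_⟩
      right
      by_contra hty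
      exact hne ⟨y, Finset.mem_filter.2 ⟨hy, hty⟩⟩
  -- the filter is unchanged by the involution
  have filter_eq : ∀ T ∈ s, (chainInvol t j T).filter (fun a => ¬ t ⊆ a) =
      T.filter (fun a => ¬ t ⊆ a) := by
    intro T hT
    have hpb : t ⊆ chainPivot t j T := ((pivot_spec T hT).1).1
    unfold chainInvol
    split
    · ext z
      simp only [Finset.mem_filter, Finset.mem_erase]
      constructor
      · rintro ⟨⟨-, hz⟩, hz2⟩
        exact ⟨hz, hz2⟩
      · rintro ⟨hz, hz2⟩
        refine ⟨⟨fun h => hz2 (h ▸ hpb), hz⟩, hz2⟩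
    · ext z
      simp only [Finset.mem_filter, Finset.mem_insert]
      constructor
      · rintro ⟨rfl | hz, hz2⟩
        · exact absurd hpb hz2
        · exact ⟨hz, hz2⟩
      · rintro ⟨hz, hz2⟩
        exact ⟨Or.inr hz, hz2⟩
  have invol_mem : ∀ T, T ∈ s → chainInvol t j T ∈ s := by
    intro T hT
    obtain ⟨hTY, hTchain⟩ := hmem.1 hT
    obtain ⟨⟨hpt, hpY⟩, hpcomp⟩ := pivot_spec T hT
    unfold chainInvol
    split
    · exact hmem.2 ⟨fun z hz => hTY (Finset.mem_of_mem_erase hz),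
        hTchain.mono (fun z hz => Finset.mem_coe.2 (Finset.mem_of_mem_erase (Finset.mem_coe.1 hz)))⟩
    · apply hmem.2
      constructor
      · intro z hz
        rcases Finset.mem_insert.1 hz with rfl | hz
        · exact hpY
        · exact hTY hz
      · intro z hz w hw hzw
        simp only [Finset.coe_insert, Set.mem_insert_iff, Finset.mem_coe] at hz hw
        rcases hz with rfl | hz
        · rcases hw with rfl | hw
          · exact absurd rfl hzw
          · rcases hpcomp w hw with h | h
            · exact Or.inr h
            · exact Or.inl h
        · rcases hw with rfl | hw
          · rcases hpcomp z hz with h | h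
            · exact Or.inl h
            · exact Or.inr h
          · exact hTchain hz hw hzw
  have invol_invol : ∀ T, T ∈ s → chainInvol t j (chainInvol t j T) = T := by
    intro T hT
    have hpiv_eq : chainPivot t j (chainInvol t j T) = chainPivot t j T := by
      unfold chainPivot
      rw [filter_eq T hT]
    have e0 : ∀ U : Finset (Finset ℕ), chainInvol t j U =
        if chainPivot t j U ∈ U then U.erase (chainPivot t j U)
        else insert (chainPivot t j U) U := fun U => rfl
    by_cases h : chainPivot t j T ∈ T
    · rw [e0 (chainInvol t j T), hpiv_eq, e0 T, if_pos h, if_neg (Finset.notMem_erase _ _),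
        Finset.insert_erase h]
    · rw [e0 (chainInvol t j T), hpiv_eq, e0 T, if_neg h, if_pos (Finset.mem_insert_self _ _),
        Finset.erase_insert h]
  have invol_card : ∀ T, T ∈ s →
      (-1 : ℤ) ^ T.card + (-1 : ℤ) ^ (chainInvol t j T).card = 0 := by
    intro T hT
    unfold chainInvol
    split
    · next h =>
      have hc : T.card = (T.erase (chainPivot t j T)).card + 1 := by
        rw [Finset.card_erase_of_mem h]
        have : 0 < T.card := Finset.card_pos.2 ⟨_, h⟩
        omega
      rw [hc, pow_succ]
      ring
    · next h =>
      rw [Finset.card_insert_of_notMem h, pow_succ]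
      ring
  have hinv : ∀ T ∈ s, chainInvol t j T ∈ s := invol_mem
  exact Finset.sum_involution (fun T _ => chainInvol t j T)
    (fun T hT => invol_card T hT)
    (fun T hT _ => by
      show chainInvol t j T ≠ T
      unfold chainInvol
      split
      · next h =>
          intro he
          have h2 := Finset.notMem_erase (chainPivot t j T) T
          rw [he] at h2
          exact h2 h
      · next h =>
          intro he
          have h2 := Finset.mem_insert_self (chainPivot t j T) T
          rw [he] at h2
          exact h h2)
    (fun T hT => hinv T hT)
    (fun T hT => invol_invol T hT)
end Dev8
section Dev9
open Finset
variable {E : Finset ℕ} {ℬ : Finset (Finset ℕ)}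

lemma flat_inter (hM : IsBasisFamily E ℬ) {F₁ F₂ : Finset ℕ} (h1 : IsFlat E ℬ F₁)
    (h2 : IsFlat E ℬ F₂) : IsFlat E ℬ (F₁ ∩ F₂) := by
  refine ⟨Finset.inter_subset_left.trans h1.1, fun e he hrk => ?_⟩
  have aux : ∀ G : Finset ℕ, IsFlat E ℬ G → F₁ ∩ F₂ ⊆ G → e ∈ G := by
    intro G hG hsub
    apply hG.2 e he
    apply le_antisymm
    · have hsubm := famRank_submod hM (insert e (F₁ ∩ F₂)) G
      have hun : insert e (F₁ ∩ F₂) ∪ G = insert e G := by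
        ext b
        simp only [Finset.mem_union, Finset.mem_insert]
        constructor
        · rintro ((rfl | hh) | hh)
          exacts [Or.inl rfl, Or.inr (hsub hh), Or.inr hh]
        · rintro (rfl | hh)
          exacts [Or.inl (Or.inl rfl), Or.inr hh]
      have hin : famRank ℬ (F₁ ∩ F₂) ≤ famRank ℬ (insert e (F₁ ∩ F₂) ∩ G) :=
        famRank_mono (Finset.subset_inter (Finset.subset_insert _ _) hsub)
      rw [hun, hrk] at hsubm
      omega
    · exact famRank_mono (Finset.subset_insert _ _)
  exact Finset.mem_inter.2 ⟨aux F₁ h1 Finset.inter_subset_left, aux F₂ h2 Finset.inter_subset_right⟩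

lemma violated_chain_sum (hM : IsBasisFamily E ℬ) {x : ↑E → ℝ}
    (hbox : ∀ e, 0 ≤ x e ∧ x e ≤ 1)
    {Y : Finset (Finset ℕ)}
    (hY : Y = (cyclicFlats E ℬ).filter (fun Z => ¬ (xs E x Z ≤ (famRank ℬ Z : ℝ))))
    (hYne : Y.Nonempty) :
    ∑ T ∈ Y.powerset.filter
        (fun T : Finset (Finset ℕ) => IsChain (· ⊆ ·) (↑T : Set (Finset ℕ))),
      (-1 : ℤ) ^ T.card = 0 := by
  have hYmem : ∀ {Z : Finset ℕ},
      Z ∈ Y ↔ Z ∈ cyclicFlats E ℬ ∧ (famRank ℬ Z : ℝ) < xs E x Z := by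
    intro Z
    rw [hY, Finset.mem_filter, not_le]
  obtain ⟨t, htY, htmax⟩ :=
    Finset.exists_max_image Y (fun Z => xs E x Z - (famRank ℬ Z : ℝ)) hYne
  apply signed_chain_sum_zero Y t htY (fun a => clos E ℬ (a ∪ t))
  intro a haY hta
  have haCF := (hYmem.1 haY).1
  have htCF := (hYmem.1 htY).1
  obtain ⟨haE, haFlat, haCyc⟩ := (mem_cyclicFlats_iff hM).1 haCF
  obtain ⟨htE, htFlat, htCyc⟩ := (mem_cyclicFlats_iff hM).1 htCF
  have hsub1 : a ⊆ clos E ℬ (a ∪ t) := (Finset.subset_union_left).trans (subset_clos _)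
  have hsub2 : t ⊆ clos E ℬ (a ∪ t) := (Finset.subset_union_right).trans (subset_clos _)
  have hmin : ∀ u ∈ Y, t ⊆ u → a ⊆ u → clos E ℬ (a ∪ t) ⊆ u := by
    intro u huY htu hau
    obtain ⟨-, huFlat, -⟩ := (mem_cyclicFlats_iff hM).1 (hYmem.1 huY).1
    exact clos_min hM huFlat (Finset.union_subset hau htu)
  refine ⟨?_, hsub2, hsub1, hmin⟩
  have hunE : a ∪ t ⊆ E := Finset.union_subset haE htE
  have hJCF : clos E ℬ (a ∪ t) ∈ cyclicFlats E ℬ := by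
    rw [mem_cyclicFlats_iff hM]
    exact ⟨clos_subset hunE, clos_isFlat hM hunE, cyc_clos hM (cyc_union hM haCyc htCyc)⟩
  rw [hYmem]
  refine ⟨hJCF, ?_⟩
  by_cases hat : a ⊆ t
  · have hu : a ∪ t = t := Finset.union_eq_right.2 hat
    rw [hu, flat_clos_eq hM htFlat]
    exact (hYmem.1 htY).2
  · have hFflat : IsFlat E ℬ (a ∩ t) := flat_inter hM haFlat htFlat
    obtain ⟨m, hmCF, hmsub, hmcard⟩ := exists_core hM (a ∩ t) hFflat
    have hrkJ : famRank ℬ (clos E ℬ (a ∪ t)) = famRank ℬ (a ∪ t) := famRank_clos hM _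
    have hsubmod := famRank_submod hM a t
    have hxs1 : xs E x (a ∪ t) ≤ xs E x (clos E ℬ (a ∪ t)) :=
      xs_mono (fun e => (hbox e).1) (subset_clos _)
    have hxs2 : xs E x (a ∩ t) ≤ xs E x m + (((a ∩ t) \ m).card : ℝ) := by
      have hmod := xs_modular x m ((a ∩ t) \ m)
      have hdisj : m ∩ ((a ∩ t) \ m) = ∅ := by
        ext b
        simp only [Finset.mem_inter, Finset.mem_sdiff, Finset.notMem_empty, iff_false]
        tauto
      rw [Finset.union_sdiff_of_subset hmsub, hdisj, xs_empty] at hmod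
      have h2 := xs_le_card (fun e => (hbox e).2) ((a ∩ t) \ m)
      linarith
    have hxsmod := xs_modular x a t
    have hvm : xs E x m - (famRank ℬ m : ℝ) ≤ xs E x t - (famRank ℬ t : ℝ) := by
      by_cases hmY : m ∈ Y
      · have h3 := htmax m hmY
        simpa using h3
      · have h3 : xs E x m ≤ (famRank ℬ m : ℝ) := by
          by_contra hcon
          exact hmY (hYmem.2 ⟨hmCF, not_le.1 hcon⟩)
        have hvt := (hYmem.1 htY).2
        linarith
    have hva := (hYmem.1 haY).2
    have hcast : (famRank ℬ m : ℝ) + (((a ∩ t) \ m).card : ℝ) = (famRank ℬ (a ∩ t) : ℝ) := by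
      exact_mod_cast hmcard
    have hcast2 : (famRank ℬ (a ∪ t) : ℝ) + (famRank ℬ (a ∩ t) : ℝ) ≤
        (famRank ℬ a : ℝ) + (famRank ℬ t : ℝ) := by
      exact_mod_cast hsubmod
    rw [hrkJ]
    linarith
end Dev9
section Dev10
open Finset
variable {E : Finset ℕ} {ℬ : Finset (Finset ℕ)}
variable {mu : Finset (Finset ℕ) → Finset (Finset ℕ) → ℤ}

lemma mu_eq (hrefl : ∀ C ∈ cyclicChains E ℬ, mu C C = 1)
    (hrec : ∀ C ∈ cyclicChains E ℬ, ∀ D ∈ cyclicChains E ℬ, C ⊂ D →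
      ∑ z ∈ (cyclicChains E ℬ).filter (fun z => C ⊆ z ∧ z ⊆ D), mu C z = 0) :
    ∀ n : ℕ, ∀ C ∈ cyclicChains E ℬ, ∀ D ∈ cyclicChains E ℬ, C ⊆ D → (D \ C).card = n →
      mu C D = (-1 : ℤ) ^ n := by
  intro n
  induction n using Nat.strong_induction_on with
  | _ n ih =>
    intro C hC D hD hCD hcard
    rcases Nat.eq_zero_or_pos n with rfl | hpos
    · have hsub : D ⊆ C := Finset.sdiff_eq_empty_iff_subset.1 (Finset.card_eq_zero.1 hcard)
      have hDC : D = C := le_antisymm hsub hCD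
      rw [hDC, pow_zero]
      exact hrefl C hC
    · have hssub : C ⊂ D := by
        refine ⟨hCD, fun h => ?_⟩
        rw [Finset.sdiff_eq_empty_iff_subset.2 h, Finset.card_empty] at hcard
        omega
      have h0 := hrec C hC D hD hssub
      set T := (cyclicChains E ℬ).filter (fun z => C ⊆ z ∧ z ⊆ D) with hT
      have hTmem : ∀ {z : Finset (Finset ℕ)}, z ∈ T ↔ C ⊆ z ∧ z ⊆ D := by
        intro z
        rw [hT, Finset.mem_filter]
        constructor
        · rintro ⟨-, h⟩
          exact h
        · rintro ⟨h1, h2⟩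
          exact ⟨chain_between_mem hC hD h1 h2, h1, h2⟩
      have hDT : D ∈ T := hTmem.2 ⟨hCD, le_refl D⟩
      have htot : ∑ z ∈ T, (-1 : ℤ) ^ (z \ C).card = 0 := by
        have hbij : ∑ z ∈ T, (-1 : ℤ) ^ (z \ C).card
            = ∑ S ∈ (D \ C).powerset, (-1 : ℤ) ^ S.card := by
          apply Finset.sum_bij' (i := fun z _ => z \ C) (j := fun S _ => C ∪ S)
          · intro z hz
            exact Finset.mem_powerset.2
              (Finset.sdiff_subset_sdiff (hTmem.1 hz).2 (le_refl C))
          · intro S hS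
            rw [Finset.mem_powerset] at hS
            exact hTmem.2 ⟨Finset.subset_union_left,
              Finset.union_subset hCD (hS.trans Finset.sdiff_subset)⟩
          · intro z hz
            exact Finset.union_sdiff_of_subset (hTmem.1 hz).1
          · intro S hS
            rw [Finset.mem_powerset] at hS
            apply Finset.union_sdiff_cancel_left
            rw [Finset.disjoint_right]
            intro b hbS
            exact (Finset.mem_sdiff.1 (hS hbS)).2
          · intro z hz
            rfl
        rw [hbij, Finset.sum_powerset_neg_one_pow_card, if_neg]
        intro hemp
        rw [hemp, Finset.card_empty] at hcard
        omega
      have hsplit : ∑ z ∈ T, mu C z = mu C D + ∑ z ∈ T.erase D, mu C z :=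
        (Finset.add_sum_erase T (mu C) hDT).symm
      have hsplit2 : ∑ z ∈ T, (-1 : ℤ) ^ (z \ C).card
          = (-1 : ℤ) ^ n + ∑ z ∈ T.erase D, (-1 : ℤ) ^ (z \ C).card := by
        rw [← hcard]
        exact (Finset.add_sum_erase T (fun z => (-1 : ℤ) ^ (z \ C).card) hDT).symm
      have hih : ∀ z ∈ T.erase D, mu C z = (-1 : ℤ) ^ (z \ C).card := by
        intro z hz
        obtain ⟨hzD, hzT⟩ := Finset.mem_erase.1 hz
        obtain ⟨hCz, hzDsub⟩ := hTmem.1 hzT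
        have hlt : (z \ C).card < n := by
          rw [← hcard]
          apply Finset.card_lt_card
          constructor
          · exact Finset.sdiff_subset_sdiff hzDsub (le_refl C)
          · intro hsub
            apply hzD
            apply le_antisymm hzDsub
            intro w hw
            by_cases hwC : w ∈ C
            · exact hCz hwC
            · exact (Finset.mem_sdiff.1 (hsub (Finset.mem_sdiff.2 ⟨hw, hwC⟩))).1
        exact ih _ hlt C hC z (chain_between_mem hC hD hCz hzDsub) hCz rfl
      have hsum_eq : ∑ z ∈ T.erase D, mu C z = ∑ z ∈ T.erase D, (-1 : ℤ) ^ (z \ C).card :=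
        Finset.sum_congr rfl hih
      rw [hsplit, hsum_eq] at h0
      rw [hsplit2] at htot
      linarith
end Dev10

/-- Let `M` be a matroid on a finite ground set `E` with no loops and no
coloops. Then, as functions `ℝ^E → ℤ`, the indicator function of the base polytope `P(M)`
equals the sum, over all chains `C` in the lattice of cyclic flats of `M` containing its
minimum and maximum, of `λ_C = −μ(C, 1̂)` times the indicator function of `P(S_C)`, where
`μ` is the Möbius function of the cyclic chain lattice of `M` (characterized here by
`μ(x, x) = 1` and `Σ_{x ≤ z ≤ y} μ(x, z) = 0` for `x < y`, with `μ(C, 1̂)` recorded in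
`muTop C`). -/
theorem statement7 (E : Finset ℕ) (ℬ : Finset (Finset ℕ)) (hM : IsBasisFamily E ℬ)
    (hloopless : ∀ e ∈ E, ∃ B ∈ ℬ, e ∈ B)
    (hcoloopless : ∀ e ∈ E, ∃ B ∈ ℬ, e ∉ B)
    (mu : Finset (Finset ℕ) → Finset (Finset ℕ) → ℤ) (muTop : Finset (Finset ℕ) → ℤ)
    (hrefl : ∀ C ∈ cyclicChains E ℬ, mu C C = 1)
    (hrec : ∀ C ∈ cyclicChains E ℬ, ∀ D ∈ cyclicChains E ℬ, C ⊂ D →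
      ∑ z ∈ (cyclicChains E ℬ).filter (fun z => C ⊆ z ∧ z ⊆ D), mu C z = 0)
    (htop : ∀ C ∈ cyclicChains E ℬ,
      (∑ z ∈ (cyclicChains E ℬ).filter (fun z => C ⊆ z), mu C z) + muTop C = 0) :
    polyInd E ℬ
      = fun x => ∑ C ∈ cyclicChains E ℬ,
          (-(muTop C)) * polyInd E (chainSchubert E ℬ C) x := by
  classical
  funext xx
  have hC0P := C0_mem_cyclicChains hM hloopless hcoloopless
  have hMemM : xx ∈ basePolytope E ℬ ↔ ((∀ e, 0 ≤ xx e ∧ xx e ≤ 1) ∧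
      xs E xx E = (famRank ℬ E : ℝ) ∧
      ∀ Z ∈ cyclicFlats E ℬ, xs E xx Z ≤ (famRank ℬ Z : ℝ)) := by
    rw [basePolytope_eq hM, mem_basePolytope_iff (polyRank_famRank hM)]
    exact mem_polySet_famRank_iff hM xx
  have hMemS : ∀ C ∈ cyclicChains E ℬ, (xx ∈ basePolytope E (chainSchubert E ℬ C) ↔
      ((∀ e, 0 ≤ xx e ∧ xx e ≤ 1) ∧ xs E xx E = (famRank ℬ E : ℝ) ∧
        ∀ Z ∈ C, xs E xx Z ≤ (famRank ℬ Z : ℝ))) := by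
    intro C hCP
    obtain ⟨hemp, hEc, hsubc, hchainc⟩ := cyclicChains_facts hM hloopless hcoloopless hCP
    unfold chainSchubert
    rw [mem_basePolytope_iff (polyRank_chainRank ⟨∅, hemp⟩ hemp hchainc)]
    exact mem_polySet_chainRank_iff hM hemp hEc hsubc xx
  have hlam : ∀ C ∈ cyclicChains E ℬ, -(muTop C)
      = ∑ D ∈ (cyclicChains E ℬ).filter (fun D => C ⊆ D), (-1 : ℤ) ^ ((D \ C).card) := by
    intro C hCP
    have h := htop C hCP
    have h2 : ∑ z ∈ (cyclicChains E ℬ).filter (fun z => C ⊆ z), mu C z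
        = ∑ z ∈ (cyclicChains E ℬ).filter (fun z => C ⊆ z), (-1 : ℤ) ^ ((z \ C).card) := by
      apply Finset.sum_congr rfl
      intro z hz
      rw [Finset.mem_filter] at hz
      exact mu_eq hrefl hrec _ C hCP z hz.1 hz.2 rfl
    rw [← h2]
    linarith
  by_cases hbase : (∀ e, 0 ≤ xx e ∧ xx e ≤ 1) ∧ xs E xx E = (famRank ℬ E : ℝ)
  case neg =>
    have hL : polyInd E ℬ xx = 0 := by
      unfold polyInd
      rw [if_neg]
      intro hmem
      exact hbase ⟨(hMemM.1 hmem).1, (hMemM.1 hmem).2.1⟩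
    rw [hL]
    symm
    apply Finset.sum_eq_zero
    intro C hCP
    have h0 : polyInd E (chainSchubert E ℬ C) xx = 0 := by
      unfold polyInd
      rw [if_neg]
      intro hmem
      have h1 := (hMemS C hCP).1 hmem
      exact hbase ⟨h1.1, h1.2.1⟩
    rw [h0, mul_zero]
  case pos =>
  set C₀ : Finset (Finset ℕ) := {∅, E} with hC₀
  set G := (cyclicFlats E ℬ).filter (fun Z => xs E xx Z ≤ (famRank ℬ Z : ℝ)) with hG
  have hempG : ∅ ∈ G := by
    refine Finset.mem_filter.2 ⟨empty_mem_cyclicFlats hM hloopless, ?_⟩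
    rw [xs_empty, famRank_empty]
    norm_num
  have hEG : E ∈ G :=
    Finset.mem_filter.2 ⟨ground_mem_cyclicFlats hM hcoloopless, le_of_eq hbase.2⟩
  have hC₀G : C₀ ⊆ G := by
    intro z hz
    rcases Finset.mem_insert.1 hz with rfl | hz
    · exact hempG
    · rw [Finset.mem_singleton.1 hz]
      exact hEG
  have hLiff : xx ∈ basePolytope E ℬ ↔ cyclicFlats E ℬ ⊆ G := by
    rw [hMemM]
    constructor
    · rintro ⟨-, -, h⟩ Z hZ
      exact Finset.mem_filter.2 ⟨hZ, h Z hZ⟩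
    · intro h
      exact ⟨hbase.1, hbase.2, fun Z hZ => (Finset.mem_filter.1 (h hZ)).2⟩
  have hSiff : ∀ C ∈ cyclicChains E ℬ,
      (xx ∈ basePolytope E (chainSchubert E ℬ C) ↔ C ⊆ G) := by
    intro C hCP
    obtain ⟨-, -, hsubc, -⟩ := cyclicChains_facts hM hloopless hcoloopless hCP
    rw [hMemS C hCP]
    constructor
    · rintro ⟨-, -, h⟩ Z hZ
      exact Finset.mem_filter.2 ⟨hsubc hZ, h Z hZ⟩
    · intro h
      exact ⟨hbase.1, hbase.2, fun Z hZ => (Finset.mem_filter.1 (h hZ)).2⟩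
  have hRHS : ∑ C ∈ cyclicChains E ℬ, (-(muTop C)) * polyInd E (chainSchubert E ℬ C) xx
      = ∑ D ∈ cyclicChains E ℬ,
          (if (D ∩ G) \ C₀ = ∅ then (-1 : ℤ) ^ ((D \ C₀).card) else 0) := by
    have step1 : ∀ C ∈ cyclicChains E ℬ,
        (-(muTop C)) * polyInd E (chainSchubert E ℬ C) xx
        = if C ⊆ G then -(muTop C) else 0 := by
      intro C hCP
      unfold polyInd
      by_cases h : C ⊆ G
      · rw [if_pos h, if_pos ((hSiff C hCP).2 h), mul_one]
      · rw [if_neg h, if_neg (fun hmem => h ((hSiff C hCP).1 hmem)), mul_zero]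
    rw [Finset.sum_congr rfl step1]
    have step2 : ∀ C ∈ cyclicChains E ℬ,
        (if C ⊆ G then -(muTop C) else 0)
        = ∑ D ∈ cyclicChains E ℬ,
            (if C ⊆ G ∧ C ⊆ D then (-1 : ℤ) ^ ((D \ C).card) else 0) := by
      intro C hCP
      by_cases h : C ⊆ G
      · rw [if_pos h, hlam C hCP, Finset.sum_filter]
        apply Finset.sum_congr rfl
        intro D _
        by_cases h2 : C ⊆ D
        · rw [if_pos h2, if_pos ⟨h, h2⟩]
        · rw [if_neg h2, if_neg (fun hh => h2 hh.2)]
      · rw [if_neg h]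
        symm
        apply Finset.sum_eq_zero
        intro D _
        rw [if_neg (fun hh => h hh.1)]
    rw [Finset.sum_congr rfl step2, Finset.sum_comm]
    apply Finset.sum_congr rfl
    intro D hDP
    have hC₀D : C₀ ⊆ D := C0_subset_of_mem hM hloopless hcoloopless hDP
    have e1 : ∑ C ∈ cyclicChains E ℬ,
        (if C ⊆ G ∧ C ⊆ D then (-1 : ℤ) ^ ((D \ C).card) else 0)
        = ∑ C ∈ (cyclicChains E ℬ).filter (fun C => C ⊆ G ∧ C ⊆ D),
            (-1 : ℤ) ^ ((D \ C).card) :=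
      (Finset.sum_filter _ _).symm
    rw [e1]
    set W := (D ∩ G) \ C₀ with hW
    have e2 : ∑ C ∈ (cyclicChains E ℬ).filter (fun C => C ⊆ G ∧ C ⊆ D),
        (-1 : ℤ) ^ ((D \ C).card)
        = ∑ S ∈ W.powerset, (-1 : ℤ) ^ ((D \ (C₀ ∪ S)).card) := by
      apply Finset.sum_bij' (i := fun C _ => C \ C₀) (j := fun S _ => C₀ ∪ S)
      · intro C hC
        rw [Finset.mem_filter] at hC
        rw [Finset.mem_powerset, hW]
        intro z hz
        rw [Finset.mem_sdiff] at hz ⊢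
        exact ⟨Finset.mem_inter.2 ⟨hC.2.2 hz.1, hC.2.1 hz.1⟩, hz.2⟩
      · intro S hS
        rw [Finset.mem_powerset, hW] at hS
        rw [Finset.mem_filter]
        have hSG : S ⊆ G := fun z hz => (Finset.mem_inter.1 (Finset.mem_sdiff.1 (hS hz)).1).2
        have hSD : S ⊆ D := fun z hz => (Finset.mem_inter.1 (Finset.mem_sdiff.1 (hS hz)).1).1
        exact ⟨chain_between_mem hC0P hDP Finset.subset_union_left
            (Finset.union_subset hC₀D hSD),
          Finset.union_subset hC₀G hSG, Finset.union_subset hC₀D hSD⟩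
      · intro C hC
        rw [Finset.mem_filter] at hC
        exact Finset.union_sdiff_of_subset (C0_subset_of_mem hM hloopless hcoloopless hC.1)
      · intro S hS
        rw [Finset.mem_powerset, hW] at hS
        apply Finset.union_sdiff_cancel_left
        rw [Finset.disjoint_right]
        intro b hbS
        exact (Finset.mem_sdiff.1 (hS hbS)).2
      · intro C hC
        rw [Finset.mem_filter] at hC
        rw [Finset.union_sdiff_of_subset (C0_subset_of_mem hM hloopless hcoloopless hC.1)]
    rw [e2]
    have e3 : ∀ S ∈ W.powerset, (-1 : ℤ) ^ ((D \ (C₀ ∪ S)).card)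
        = (-1 : ℤ) ^ ((D \ C₀).card) * (-1 : ℤ) ^ S.card := by
      intro S hS
      rw [Finset.mem_powerset, hW] at hS
      have hSDC : S ⊆ D \ C₀ := by
        intro z hz
        have h5 := hS hz
        rw [Finset.mem_sdiff] at h5 ⊢
        exact ⟨Finset.mem_of_mem_inter_left h5.1, h5.2⟩
      have hcard : (D \ (C₀ ∪ S)).card = (D \ C₀).card - S.card := by
        have h6 : D \ (C₀ ∪ S) = (D \ C₀) \ S := by
          ext z
          simp only [Finset.mem_sdiff, Finset.mem_union]
          tauto
        rw [h6, Finset.card_sdiff_of_subset hSDC]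
      have hle : S.card ≤ (D \ C₀).card := Finset.card_le_card hSDC
      rw [hcard]
      symm
      have harith : (D \ C₀).card + S.card = ((D \ C₀).card - S.card) + 2 * S.card := by omega
      rw [← pow_add, harith, pow_add, pow_mul, neg_one_sq, one_pow, mul_one]
    rw [Finset.sum_congr rfl e3, ← Finset.mul_sum, Finset.sum_powerset_neg_one_pow_card]
    by_cases hWe : W = ∅
    · rw [if_pos hWe, if_pos hWe, mul_one]
    · rw [if_neg hWe, if_neg hWe, mul_zero]
  rw [hRHS]
  by_cases hGall : cyclicFlats E ℬ ⊆ G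
  · have hL1 : polyInd E ℬ xx = 1 := by
      unfold polyInd
      rw [if_pos (hLiff.2 hGall)]
    rw [hL1]
    symm
    have hterm : ∀ D ∈ cyclicChains E ℬ,
        (if (D ∩ G) \ C₀ = ∅ then (-1 : ℤ) ^ ((D \ C₀).card) else 0)
        = if D = C₀ then 1 else 0 := by
      intro D hDP
      have hC₀D : C₀ ⊆ D := C0_subset_of_mem hM hloopless hcoloopless hDP
      have hDCF : D ⊆ cyclicFlats E ℬ :=
        Finset.mem_powerset.1 (Finset.mem_of_mem_filter D hDP)
      have hDG : D ∩ G = D := Finset.inter_eq_left.2 (hDCF.trans hGall)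
      rw [hDG]
      by_cases h : D = C₀
      · rw [if_pos h, if_pos (by rw [h, Finset.sdiff_self]), h, Finset.sdiff_self,
          Finset.card_empty, pow_zero]
      · rw [if_neg h, if_neg]
        intro hemp
        apply h
        apply le_antisymm _ hC₀D
        intro z hz
        by_contra hzC₀
        have h7 : z ∈ D \ C₀ := Finset.mem_sdiff.2 ⟨hz, hzC₀⟩
        rw [hemp] at h7
        exact Finset.notMem_empty z h7
    rw [Finset.sum_congr rfl hterm,
      Finset.sum_ite_eq' (cyclicChains E ℬ) C₀ (fun _ => (1 : ℤ)), if_pos hC0P]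
  · have hL0 : polyInd E ℬ xx = 0 := by
      unfold polyInd
      rw [if_neg (fun hmem => hGall (hLiff.1 hmem))]
    rw [hL0]
    set Y := (cyclicFlats E ℬ).filter (fun Z => ¬ (xs E xx Z ≤ (famRank ℬ Z : ℝ))) with hY
    have hYG : ∀ {z : Finset ℕ}, z ∈ Y ↔ z ∈ cyclicFlats E ℬ ∧ z ∉ G := by
      intro z
      rw [hY, hG, Finset.mem_filter, Finset.mem_filter]
      tauto
    have hYne : Y.Nonempty := by
      obtain ⟨Z, hZ1, hZ2⟩ := Finset.not_subset.1 hGall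
      exact ⟨Z, hYG.2 ⟨hZ1, hZ2⟩⟩
    have hTnotC₀ : ∀ {T : Finset (Finset ℕ)}, T ⊆ Y → ∀ z ∈ T, z ∉ C₀ := by
      intro T hTY z hzT hzC₀
      have h8 : z ∉ G := (hYG.1 (hTY hzT)).2
      exact h8 (hC₀G hzC₀)
    have e5 : ∑ D ∈ (cyclicChains E ℬ).filter (fun D => (D ∩ G) \ C₀ = ∅),
        (-1 : ℤ) ^ ((D \ C₀).card)
        = ∑ T ∈ Y.powerset.filter
            (fun T : Finset (Finset ℕ) => IsChain (· ⊆ ·) (↑T : Set (Finset ℕ))),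
          (-1 : ℤ) ^ T.card := by
      apply Finset.sum_bij' (i := fun D _ => D \ C₀) (j := fun T _ => T ∪ C₀)
      · intro D hD
        rw [Finset.mem_filter] at hD
        obtain ⟨hDP, hDcond⟩ := hD
        obtain ⟨-, -, hDCF, hDchain⟩ := cyclicChains_facts hM hloopless hcoloopless hDP
        rw [Finset.mem_filter, Finset.mem_powerset]
        constructor
        · intro z hz
          rw [Finset.mem_sdiff] at hz
          rw [hYG]
          refine ⟨hDCF hz.1, fun hzG => ?_⟩
          have h9 : z ∈ (D ∩ G) \ C₀ := Finset.mem_sdiff.2 ⟨Finset.mem_inter.2 ⟨hz.1, hzG⟩, hz.2⟩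
          rw [hDcond] at h9
          exact Finset.notMem_empty z h9
        · exact hDchain.mono (fun z hz =>
            Finset.mem_coe.2 (Finset.mem_sdiff.1 (Finset.mem_coe.1 hz)).1)
      · intro T hT
        rw [Finset.mem_filter, Finset.mem_powerset] at hT
        obtain ⟨hTY, hTchain⟩ := hT
        have hTCF : T ⊆ cyclicFlats E ℬ := fun z hz => (hYG.1 (hTY hz)).1
        have hUCF : T ∪ C₀ ⊆ cyclicFlats E ℬ := by
          apply Finset.union_subset hTCF
          intro z hz
          rcases Finset.mem_insert.1 hz with rfl | hz
          · exact empty_mem_cyclicFlats hM hloopless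
          · rw [Finset.mem_singleton.1 hz]
            exact ground_mem_cyclicFlats hM hcoloopless
        have hUchain : IsChain (· ⊆ ·) (↑(T ∪ C₀) : Set (Finset ℕ)) := by
          intro z hz w hw hne
          rw [Finset.mem_coe, Finset.mem_union] at hz hw
          have hzE : z = ∅ ∨ z = E ∨ z ∈ T := by
            rcases hz with h | h
            · exact Or.inr (Or.inr h)
            · rcases Finset.mem_insert.1 h with h | h
              · exact Or.inl h
              · exact Or.inr (Or.inl (Finset.mem_singleton.1 h))
          have hwE : w = ∅ ∨ w = E ∨ w ∈ T := by
            rcases hw with h | h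
            · exact Or.inr (Or.inr h)
            · rcases Finset.mem_insert.1 h with h | h
              · exact Or.inl h
              · exact Or.inr (Or.inl (Finset.mem_singleton.1 h))
          rcases hzE with hz0 | hzE' | hzT
          · refine Or.inl ?_
            rw [hz0]
            exact Finset.empty_subset w
          · rcases hwE with hw0 | hwE' | hwT
            · refine Or.inr ?_
              rw [hw0]
              exact Finset.empty_subset z
            · exact absurd (hzE'.trans hwE'.symm) hne
            · refine Or.inr ?_
              rw [hzE']
              exact subset_of_mem_cyclicFlats (hTCF hwT)
          · rcases hwE with hw0 | hwE' | hwT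
            · refine Or.inr ?_
              rw [hw0]
              exact Finset.empty_subset z
            · refine Or.inl ?_
              rw [hwE']
              exact subset_of_mem_cyclicFlats (hTCF hzT)
            · exact hTchain (Finset.mem_coe.2 hzT) (Finset.mem_coe.2 hwT) hne
        rw [Finset.mem_filter]
        refine ⟨Finset.mem_filter.2 ⟨Finset.mem_powerset.2 hUCF,
          hUCF, hUchain,
          ⟨∅, Finset.mem_union_right _ (Finset.mem_insert_self _ _),
            fun G' _ => Finset.empty_subset G'⟩,
          ⟨E, Finset.mem_union_right _ (Finset.mem_insert_of_mem (Finset.mem_singleton_self E)),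
            fun G' hG' => subset_of_mem_cyclicFlats hG'⟩⟩, ?_⟩
        rw [Finset.eq_empty_iff_forall_notMem]
        intro z hz
        rw [Finset.mem_sdiff, Finset.mem_inter, Finset.mem_union] at hz
        obtain ⟨⟨hz1, hz2⟩, hz3⟩ := hz
        rcases hz1 with h | h
        · exact (hYG.1 (hTY h)).2 hz2
        · exact hz3 h
      · intro D hD
        rw [Finset.mem_filter] at hD
        exact Finset.sdiff_union_of_subset
          (C0_subset_of_mem hM hloopless hcoloopless hD.1)
      · intro T hT
        rw [Finset.mem_filter, Finset.mem_powerset] at hT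
        ext z
        rw [Finset.mem_sdiff, Finset.mem_union]
        constructor
        · rintro ⟨h | h, hz2⟩
          · exact h
          · exact absurd h hz2
        · intro hzT
          exact ⟨Or.inl hzT, hTnotC₀ hT.1 z hzT⟩
      · intro D _
        rfl
    symm
    rw [← Finset.sum_filter, e5]
    exact violated_chain_sum hM hbase.1 hY hYne
end GPoly
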